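/- arXiv:1507.00135 — 6 statements merged into one kernel-verified Lean document; each statement's English description precedes it below -/
import Mathlib

section
/- Let G be an irreducible subgroup of PL_o([a,c]), where a < c. If a < t < t' < c then there exists g ∈ G with g(t') < t. -/
open Set

/-- A map `g : ℝ → ℝ` is *finitary piecewise linear* if there is a finite set of
breakpoints outside of which `g` is locally affine. -/
def IsFinitaryPL (g : ℝ → ℝ) : Prop :=
  ∃ B : Finset ℝ, ∀ t : ℝ, t ∉ B →
    ∃ m b : ℝ, ∃ ε : ℝ, 0 < ε ∧ ∀ u : ℝ, |u - t| < ε → g u = m * u + b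

/-- The support of a map of the real line. -/
def suppOf (g : ℝ → ℝ) : Set ℝ := {t : ℝ | g t ≠ t}

/-- `PLo I` is the set of orientation-preserving (i.e. strictly increasing) finitary
piecewise linear homeomorphisms of `ℝ` with support contained in `I`. -/
def PLo (I : Set ℝ) : Set (Equiv.Perm ℝ) :=
  {g : Equiv.Perm ℝ | StrictMono ⇑g ∧ IsFinitaryPL ⇑g ∧ suppOf ⇑g ⊆ I}

/-- The right derivative of `g` at `a`. -/
noncomputable def rightSlope (g : ℝ → ℝ) (a : ℝ) : ℝ := derivWithin g (Ici a) a

/-- The left derivative of `g` at `c`. -/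
noncomputable def leftSlope (g : ℝ → ℝ) (c : ℝ) : ℝ := derivWithin g (Iic c) c

/-- The amplitude of the translation with which `g` coincides near `+∞`. -/
noncomputable def amplTop (g : ℝ → ℝ) : ℝ :=
  Filter.limUnder Filter.atTop (fun t => g t - t)

/-- The amplitude of the translation with which `g` coincides near `-∞`. -/
noncomputable def amplBot (g : ℝ → ℝ) : ℝ :=
  Filter.limUnder Filter.atBot (fun t => g t - t)

/-- A character of a group is a homomorphism into `(ℝ, +)`. -/
def IsChar {Γ : Type*} [Group Γ] (χ : Γ → ℝ) : Prop :=
  ∀ g h : Γ, χ (g * h) = χ g + χ h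

/-- Two characters lie on the same ray: `ψ` is a positive multiple of `χ`. -/
def SameRayChar {Γ : Type*} (χ ψ : Γ → ℝ) : Prop :=
  ∃ r : ℝ, 0 < r ∧ ∀ g : Γ, ψ g = r * χ g

/-- The subgraph `Γ(G, X)_χ` of the Cayley graph of `G` with respect to the generating
set `X`, spanned by the vertices `g` with `χ g ≥ 0`, is connected. -/
def CayleyConnected {Γ : Type*} [Group Γ] (X : Set Γ) (χ : Γ → ℝ) : Prop :=
  ∀ g h : Γ, 0 ≤ χ g → 0 ≤ χ h →
    Relation.ReflTransGen
      (fun u v : Γ => 0 ≤ χ u ∧ 0 ≤ χ v ∧ ∃ x ∈ X, v = u * x ∨ u = v * x) g h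

/-- `[χ] ∈ Σ¹(G)`: for every generating set `X` of `G` the subgraph `Γ(G,X)_χ`
of the Cayley graph is connected. -/
def MemSigma1 {Γ : Type*} [Group Γ] (χ : Γ → ℝ) : Prop :=
  ∀ X : Set Γ, Subgroup.closure X = ⊤ → CayleyConnected X χ

/-- The character `χ_ℓ = ln ∘ σ_ℓ` of a subgroup `G` of `PL_o([a,c])`. -/
noncomputable def chiL (G : Subgroup (Equiv.Perm ℝ)) (a : ℝ) : G → ℝ :=
  fun g => Real.log (rightSlope (⇑(g : Equiv.Perm ℝ)) a)

/-- The character `χ_r = ln ∘ σ_r` of a subgroup `G` of `PL_o([a,c])`. -/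
noncomputable def chiR (G : Subgroup (Equiv.Perm ℝ)) (c : ℝ) : G → ℝ :=
  fun g => Real.log (leftSlope (⇑(g : Equiv.Perm ℝ)) c)

/-- **Lemma (Statement 3).** If `G ≤ PL_o([a,c])` is irreducible and
`a < t < t' < c`, then some `g ∈ G` satisfies `g(t') < t`. -/
theorem exists_map_below_of_irreducible
    (a c : ℝ) (hac : a < c)
    (G : Subgroup (Equiv.Perm ℝ)) (hG : (G : Set (Equiv.Perm ℝ)) ⊆ PLo (Icc a c))
    (hirr : ∀ s : ℝ, a < s → s < c → ∃ g ∈ G, g s ≠ s)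
    (t t' : ℝ) (hat : a < t) (htt' : t < t') (ht'c : t' < c) :
    ∃ g ∈ G, g t' < t := by
  by_contra hcon
  push_neg at hcon
  -- the orbit of t'
  set S : Set ℝ := {x | ∃ g ∈ G, g t' = x} with hS
  have hne : S.Nonempty := ⟨t', 1, G.one_mem, rfl⟩
  have hbdd : BddBelow S := ⟨t, by rintro x ⟨g, hg, rfl⟩; exact hcon g hg⟩
  set m : ℝ := sInf S with hm
  have hmt : t ≤ m := le_csInf hne (by rintro x ⟨g, hg, rfl⟩; exact hcon g hg)
  have hmt' : m ≤ t' := csInf_le hbdd ⟨1, G.one_mem, rfl⟩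
  obtain ⟨g, hg, hgm⟩ := hirr m (lt_of_lt_of_le hat hmt) (lt_of_le_of_lt hmt' ht'c)
  apply hgm
  have hmono : StrictMono ⇑g := (hG hg).1
  let e : ℝ ≃o ℝ := StrictMono.orderIsoOfSurjective ⇑g hmono g.surjective
  have hiso : ∀ x, e x = g x := fun _ => rfl
  have himg : e '' S = S := by
    ext x
    constructor
    · rintro ⟨y, ⟨h, hh, rfl⟩, rfl⟩
      exact ⟨g * h, G.mul_mem hg hh, rfl⟩
    · rintro ⟨h, hh, rfl⟩
      refine ⟨g⁻¹ (h t'), ⟨g⁻¹ * h, G.mul_mem (G.inv_mem hg) hh, rfl⟩, ?_⟩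
      simpa [hiso] using g.apply_symm_apply (h t')
  have := e.map_csInf' hne hbdd
  rw [himg] at this
  simpa [hiso] using this
end

section
/- Let G be an irreducible subgroup of PL_o([a,c]), where a < c. The homomorphisms σ_ℓ and σ_r (restricted to G) are both non-trivial if, and only if, G has a finitely generated irreducible subgroup. -/
open Set

open Filter


lemma two_affine {m b m' b' x y : ℝ} (hxy : x ≠ y)
    (h1 : m*x+b = m'*x+b') (h2 : m*y+b = m'*y+b') : m = m' ∧ b = b' := by
  have hm : m = m' := by
    have h3 : m * (x - y) = m' * (x - y) := by ring_nf; linarith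
    exact mul_right_cancel₀ (sub_ne_zero.mpr hxy) h3
  exact ⟨hm, by rw [hm] at h1; linarith⟩

lemma affine_right_of_locally_affine {g : ℝ → ℝ} (hg : Continuous g) {p q t0 m b : ℝ}
    (ht0 : t0 ∈ Ioo p q)
    (hloc : ∀ t ∈ Ioo p q, ∃ m' b' ε, 0 < ε ∧ ∀ u, |u - t| < ε → g u = m' * u + b')
    (hA0 : ∃ ε0 > 0, ∀ u, |u - t0| < ε0 → g u = m * u + b) :
    ∀ t, t0 ≤ t → t < q → g t = m * t + b := by
  obtain ⟨ε0, hε0, hA0⟩ := hA0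
  by_contra hcon
  push_neg at hcon
  obtain ⟨t1, ht01, ht1q, hne⟩ := hcon
  set T : Set ℝ := {t | t ∈ Icc t0 t1 ∧ g t ≠ m * t + b} with hT
  have hTne : T.Nonempty := ⟨t1, ⟨ht01, le_refl _⟩, hne⟩
  have hTbdd : BddBelow T := ⟨t0, fun t ht => ht.1.1⟩
  set s := sInf T with hs
  have hst0 : t0 ≤ s := le_csInf hTne fun t ht => ht.1.1
  have hst1 : s ≤ t1 := csInf_le hTbdd ⟨⟨ht01, le_refl _⟩, hne⟩
  have hbelow : ∀ t, t0 ≤ t → t < s → g t = m * t + b := by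
    intro t h1 h2
    by_contra h3
    exact absurd (csInf_le hTbdd ⟨⟨h1, le_of_lt (lt_of_lt_of_le h2 hst1)⟩, h3⟩) (not_le.mpr h2)
  have hgs : g s = m * s + b := by
    rcases eq_or_lt_of_le hst0 with h | h
    · exact hA0 s (by rw [← h]; simpa using hε0)
    · -- continuity from the left
      have h1 : Tendsto g (nhdsWithin s (Iio s)) (nhds (g s)) :=
        (hg.tendsto s).mono_left nhdsWithin_le_nhds
      have h2 : Tendsto (fun u => m * u + b) (nhdsWithin s (Iio s)) (nhds (m * s + b)) :=
        ((continuous_const.mul continuous_id).add continuous_const |>.tendsto s).mono_left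
          nhdsWithin_le_nhds
      have hev : g =ᶠ[nhdsWithin s (Iio s)] (fun u => m * u + b) := by
        filter_upwards [Ioo_mem_nhdsLT_of_mem (⟨h, le_refl s⟩ : s ∈ Ioc t0 s)] with u hu
        exact hbelow u (le_of_lt hu.1) hu.2
      exact tendsto_nhds_unique (h1.congr' hev) h2
  have hsIoo : s ∈ Ioo p q := ⟨lt_of_lt_of_le ht0.1 hst0, lt_of_le_of_lt hst1 ht1q⟩
  obtain ⟨m', b', ε, hε, hA'⟩ := hloc s hsIoo
  -- find x ≠ s where both representations hold
  have hmb : m = m' ∧ b = b' := by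
    rcases eq_or_lt_of_le hst0 with h | h
    · -- s = t0 : use hA0 near t0
      set x := s - min ε0 ε / 2 with hx
      have hmin : 0 < min ε0 ε := lt_min hε0 hε
      have habs : |x - s| = min ε0 ε / 2 := by
        have hxe : x - s = -(min ε0 ε / 2) := by rw [hx]; ring
        rw [hxe, abs_neg, abs_of_nonneg (by linarith)]
      have hxs : x ≠ s := by
        intro hh
        rw [hh, sub_self, abs_zero] at habs
        linarith
      have h1 : g x = m * x + b := by
        apply hA0
        rw [h, habs]
        linarith [min_le_left ε0 ε]
      have h2 : g x = m' * x + b' := by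
        apply hA'
        rw [habs]
        linarith [min_le_right ε0 ε]
      have h3 : g s = m' * s + b' := hA' s (by simpa using hε)
      exact two_affine hxs (h1 ▸ h2 ▸ rfl) (hgs ▸ h3 ▸ rfl)
    · -- t0 < s : use hbelow
      set x := max t0 (s - ε / 2) with hx
      have hxlt : x < s := max_lt h (by linarith)
      have h1 : g x = m * x + b := hbelow x (le_max_left _ _) hxlt
      have h2 : g x = m' * x + b' := by
        apply hA'
        rw [abs_sub_comm, abs_of_nonneg (by linarith : (0:ℝ) ≤ s - x)]
        have : s - ε / 2 ≤ x := le_max_right _ _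
        linarith
      have h3 : g s = m' * s + b' := hA' s (by simpa using hε)
      exact two_affine (ne_of_lt hxlt) (h1 ▸ h2 ▸ rfl) (hgs ▸ h3 ▸ rfl)
  -- now all t in [s, s+ε) satisfy g t = A t, so T has lower bound s + ε
  have hlb : ∀ t ∈ T, s + ε ≤ t := by
    intro t ht
    by_contra hh
    push_neg at hh
    have h1 : s ≤ t := csInf_le hTbdd ht
    have h2 : g t = m' * t + b' := hA' t (by rw [abs_of_nonneg (by linarith)]; linarith)
    exact ht.2 (by rw [h2, hmb.1, hmb.2])
  have := le_csInf hTne hlb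
  linarith

lemma affine_of_locally_affine {g : ℝ → ℝ} (hg : Continuous g) {p q : ℝ} (hpq : p < q)
    (hloc : ∀ t ∈ Ioo p q, ∃ m' b' ε, 0 < ε ∧ ∀ u, |u - t| < ε → g u = m' * u + b') :
    ∃ m b, ∀ t ∈ Ioo p q, g t = m * t + b := by
  set t0 := (p + q) / 2 with ht0def
  have ht0 : t0 ∈ Ioo p q := ⟨by simp only [ht0def]; linarith, by simp only [ht0def]; linarith⟩
  obtain ⟨m, b, ε0, hε0, hA0⟩ := hloc t0 ht0
  refine ⟨m, b, ?_⟩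
  have hright : ∀ t, t0 ≤ t → t < q → g t = m * t + b :=
    affine_right_of_locally_affine hg ht0 hloc ⟨ε0, hε0, hA0⟩
  -- left side via reflection
  set g' : ℝ → ℝ := fun u => g (-u) with hg'
  have hg'c : Continuous g' := hg.comp continuous_neg
  have hloc' : ∀ t ∈ Ioo (-q) (-p), ∃ m' b' ε, 0 < ε ∧ ∀ u, |u - t| < ε → g' u = m' * u + b' := by
    intro t ht
    obtain ⟨m', b', ε, hε, hA⟩ := hloc (-t) ⟨by have := ht.2; linarith, by have := ht.1; linarith⟩
    refine ⟨-m', b', ε, hε, fun u hu => ?_⟩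
    have : |(-u) - (-t)| < ε := by rw [show (-u) - (-t) = -(u - t) by ring, abs_neg]; exact hu
    have := hA (-u) this
    simp only [hg']
    rw [this]; ring
  have ht0' : (-t0) ∈ Ioo (-q) (-p) := ⟨by have := ht0.2; linarith, by have := ht0.1; linarith⟩
  have hA0' : ∃ ε1 > 0, ∀ u, |u - (-t0)| < ε1 → g' u = (-m) * u + b := by
    refine ⟨ε0, hε0, fun u hu => ?_⟩
    have : |(-u) - t0| < ε0 := by rw [show (-u) - t0 = -(u - (-t0)) by ring, abs_neg]; exact hu
    have := hA0 (-u) this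
    simp only [hg']
    rw [this]; ring
  have hleft := affine_right_of_locally_affine hg'c ht0' hloc' hA0'
  intro t ht
  rcases le_or_gt t0 t with h | h
  · exact hright t h ht.2
  · have := hleft (-t) (by linarith) (by simpa using ht.1)
    simp only [hg'] at this
    rw [neg_neg] at this
    rw [this]; ring

-- basic facts about PLo
lemma plo_continuous {I : Set ℝ} {g : Equiv.Perm ℝ} (hg : g ∈ PLo I) : Continuous ⇑g :=
  (StrictMono.orderIsoOfSurjective ⇑g hg.1 g.surjective).toHomeomorph.continuous

lemma plo_fix_out {a c : ℝ} {g : Equiv.Perm ℝ} (hg : g ∈ PLo (Icc a c)) :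
    ∀ t, t ∉ Icc a c → g t = t := by
  intro t ht
  by_contra h
  exact ht (hg.2.2 h)

lemma plo_fix_left {a c : ℝ} {g : Equiv.Perm ℝ} (hac : a ≤ c) (hg : g ∈ PLo (Icc a c)) :
    g a = a := by
  have hfix : ∀ t, t < a → g t = t := fun t ht =>
    plo_fix_out hg t (by simp [mem_Icc]; intro h; linarith)
  have h1 : a ≤ g a := le_of_forall_lt fun t ht => by
    calc t = g t := (hfix t ht).symm
    _ < g a := hg.1 ht
  rcases eq_or_lt_of_le h1 with h | h
  · exact h.symm
  · exfalso
    set t := g.symm a with htd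
    have hgt : g t = a := g.apply_symm_apply a
    rcases lt_trichotomy t a with h2 | h2 | h2
    · rw [hfix t h2] at hgt; exact absurd hgt (ne_of_lt h2)
    · rw [h2] at hgt; rw [hgt] at h; exact lt_irrefl a h
    · have := hg.1 h2
      rw [hgt] at this
      linarith

lemma plo_fix_right {a c : ℝ} {g : Equiv.Perm ℝ} (hg : g ∈ PLo (Icc a c)) :
    g c = c := by
  have hfix : ∀ t, c < t → g t = t := fun t ht =>
    plo_fix_out hg t (by simp [mem_Icc]; intro h; linarith)
  have h1 : g c ≤ c := by
    by_contra h
    push_neg at h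
    have h2 : g ((c + g c)/2) = (c + g c)/2 := hfix _ (by linarith)
    have h3 : g c < g ((c + g c)/2) := hg.1 (by linarith)
    rw [h2] at h3
    linarith
  rcases eq_or_lt_of_le h1 with h | h
  · exact h
  · exfalso
    set t := g.symm c with htd
    have hgt : g t = c := g.apply_symm_apply c
    rcases lt_trichotomy t c with h2 | h2 | h2
    · have := hg.1 h2
      rw [hgt] at this
      linarith
    · rw [h2] at hgt; rw [hgt] at h; exact lt_irrefl c h
    · rw [hfix t h2] at hgt; exact absurd hgt (ne_of_gt h2)

/-- A common positive parameter for finitely many monotone conditions. -/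
lemma finset_common_delta {α : Type*} (S : Finset α) (P : α → ℝ → Prop)
    (hmono : ∀ s δ δ', 0 < δ' → δ' ≤ δ → P s δ → P s δ')
    (h : ∀ s ∈ S, ∃ δ > 0, P s δ) : ∃ δ > 0, ∀ s ∈ S, P s δ := by
  classical
  induction S using Finset.induction_on with
  | empty => exact ⟨1, one_pos, by simp⟩
  | @insert x T hx ih =>
    obtain ⟨δ1, hδ1, h1⟩ := h x (Finset.mem_insert_self x T)
    obtain ⟨δ2, hδ2, h2⟩ := ih fun s hs => h s (Finset.mem_insert_of_mem hs)
    refine ⟨min δ1 δ2, lt_min hδ1 hδ2, fun s hs => ?_⟩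
    rcases Finset.mem_insert.mp hs with rfl | hs
    · exact hmono s δ1 _ (lt_min hδ1 hδ2) (min_le_left _ _) h1
    · exact hmono s δ2 _ (lt_min hδ1 hδ2) (min_le_right _ _) (h2 s hs)

/-- Near `a` (from the right), any `g ∈ PLo [a,c]` is affine with slope `rightSlope g a`. -/
lemma slope_right {a c : ℝ} (hac : a ≤ c) {g : Equiv.Perm ℝ} (hg : g ∈ PLo (Icc a c)) :
    ∃ δ > 0, ∀ t ∈ Ioo a (a + δ), g t = a + rightSlope (⇑g) a * (t - a) := by
  obtain ⟨hmono, ⟨B, hB⟩, hsupp⟩ := hg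
  have hcont : Continuous ⇑g := plo_continuous ⟨hmono, ⟨B, hB⟩, hsupp⟩
  have hga : g a = a := plo_fix_left hac ⟨hmono, ⟨B, hB⟩, hsupp⟩
  -- find δ0 > 0 such that Ioo a (a+δ0) avoids B
  obtain ⟨δ0, hδ0, hBout⟩ : ∃ δ > 0, ∀ x ∈ B, x ∉ Ioo a (a + δ) := by
    apply finset_common_delta B (fun x δ => x ∉ Ioo a (a + δ))
    · intro s δ δ' _ hle hs hmem
      exact hs ⟨hmem.1, lt_of_lt_of_le hmem.2 (by linarith)⟩
    · intro x _
      rcases le_or_gt x a with h | h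
      · exact ⟨1, one_pos, fun hmem => absurd hmem.1 (not_lt.mpr h)⟩
      · exact ⟨x - a, by linarith, fun hmem => by
          have := hmem.2; simp only [mem_Ioo] at *; linarith⟩
  have hloc : ∀ t ∈ Ioo a (a + δ0), ∃ m' b' ε, 0 < ε ∧ ∀ u, |u - t| < ε →
      g u = m' * u + b' := by
    intro t ht
    exact hB t (fun hmem => hBout t hmem ht)
  obtain ⟨m, b, hmb⟩ := affine_of_locally_affine hcont (by linarith : a < a + δ0) hloc
  -- continuity at a gives a = m * a + b
  have hab : a = m * a + b := by
    have h1 : Tendsto ⇑g (nhdsWithin a (Ioi a)) (nhds a) := by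
      have := (hcont.tendsto a).mono_left (nhdsWithin_le_nhds (s := Ioi a))
      rwa [hga] at this
    have h2 : Tendsto (fun u => m * u + b) (nhdsWithin a (Ioi a)) (nhds (m * a + b)) :=
      ((continuous_const.mul continuous_id).add continuous_const |>.tendsto a).mono_left
        nhdsWithin_le_nhds
    have hev : ⇑g =ᶠ[nhdsWithin a (Ioi a)] (fun u => m * u + b) := by
      filter_upwards [Ioo_mem_nhdsGT_of_mem (⟨le_refl a, by linarith⟩ : a ∈ Ico a (a + δ0))]
        with u hu
      exact hmb u hu
    exact tendsto_nhds_unique (h1.congr' hev) h2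
  -- compute rightSlope
  have hslope : rightSlope (⇑g) a = m := by
    have hev : ⇑g =ᶠ[nhdsWithin a (Ici a)] (fun u => m * u + b) := by
      filter_upwards [Ico_mem_nhdsGE_of_mem (⟨le_refl a, by linarith⟩ : a ∈ Ico a (a + δ0))]
        with u hu
      rcases eq_or_lt_of_le hu.1 with h | h
      · rw [← h, hga]; exact hab
      · exact hmb u ⟨h, hu.2⟩
    have h0 : g a = m * a + b := by rw [hga]; exact hab
    have h1 : derivWithin (⇑g) (Ici a) a = derivWithin (fun u => m * u + b) (Ici a) a :=
      hev.derivWithin_eq h0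
    have h2 : HasDerivAt (fun u : ℝ => m * u + b) m a := by
      simpa using ((hasDerivAt_id a).const_mul m).add_const b
    rw [rightSlope, h1, (h2.hasDerivWithinAt).derivWithin (uniqueDiffOn_Ici a a (self_mem_Ici))]
  refine ⟨δ0, hδ0, fun t ht => ?_⟩
  rw [hslope, hmb t ht]
  linear_combination -hab

/-- Near `c` (from the left), any `g ∈ PLo [a,c]` is affine with slope `leftSlope g c`. -/
lemma slope_left {a c : ℝ} (hac : a ≤ c) {g : Equiv.Perm ℝ} (hg : g ∈ PLo (Icc a c)) :
    ∃ δ > 0, ∀ t ∈ Ioo (c - δ) c, g t = c + leftSlope (⇑g) c * (t - c) := by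
  obtain ⟨hmono, ⟨B, hB⟩, hsupp⟩ := hg
  have hcont : Continuous ⇑g := plo_continuous ⟨hmono, ⟨B, hB⟩, hsupp⟩
  have hgc : g c = c := plo_fix_right ⟨hmono, ⟨B, hB⟩, hsupp⟩
  obtain ⟨δ0, hδ0, hBout⟩ : ∃ δ > 0, ∀ x ∈ B, x ∉ Ioo (c - δ) c := by
    apply finset_common_delta B (fun x δ => x ∉ Ioo (c - δ) c)
    · intro s δ δ' _ hle hs hmem
      exact hs ⟨lt_of_le_of_lt (by linarith) hmem.1, hmem.2⟩
    · intro x _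
      rcases le_or_gt c x with h | h
      · exact ⟨1, one_pos, fun hmem => absurd hmem.2 (not_lt.mpr h)⟩
      · exact ⟨c - x, by linarith, fun hmem => by
          have := hmem.1; simp only [mem_Ioo] at *; linarith⟩
  have hloc : ∀ t ∈ Ioo (c - δ0) c, ∃ m' b' ε, 0 < ε ∧ ∀ u, |u - t| < ε →
      g u = m' * u + b' := by
    intro t ht
    exact hB t (fun hmem => hBout t hmem ht)
  obtain ⟨m, b, hmb⟩ := affine_of_locally_affine hcont (by linarith : c - δ0 < c) hloc
  have hab : c = m * c + b := by
    have h1 : Tendsto ⇑g (nhdsWithin c (Iio c)) (nhds c) := by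
      have := (hcont.tendsto c).mono_left (nhdsWithin_le_nhds (s := Iio c))
      rwa [hgc] at this
    have h2 : Tendsto (fun u => m * u + b) (nhdsWithin c (Iio c)) (nhds (m * c + b)) :=
      ((continuous_const.mul continuous_id).add continuous_const |>.tendsto c).mono_left
        nhdsWithin_le_nhds
    have hev : ⇑g =ᶠ[nhdsWithin c (Iio c)] (fun u => m * u + b) := by
      filter_upwards [Ioo_mem_nhdsLT_of_mem (⟨by linarith, le_refl c⟩ : c ∈ Ioc (c - δ0) c)]
        with u hu
      exact hmb u hu
    exact tendsto_nhds_unique (h1.congr' hev) h2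
  have hslope : leftSlope (⇑g) c = m := by
    have hev : ⇑g =ᶠ[nhdsWithin c (Iic c)] (fun u => m * u + b) := by
      filter_upwards [Ioc_mem_nhdsLE_of_mem (⟨by linarith, le_refl c⟩ : c ∈ Ioc (c - δ0) c)]
        with u hu
      rcases eq_or_lt_of_le hu.2 with h | h
      · rw [h, hgc]; exact hab
      · exact hmb u ⟨hu.1, h⟩
    have h0 : g c = m * c + b := by rw [hgc]; exact hab
    have h1 : derivWithin (⇑g) (Iic c) c = derivWithin (fun u => m * u + b) (Iic c) c :=
      hev.derivWithin_eq h0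
    have h2 : HasDerivAt (fun u : ℝ => m * u + b) m c := by
      simpa using ((hasDerivAt_id c).const_mul m).add_const b
    rw [leftSlope, h1, (h2.hasDerivWithinAt).derivWithin (uniqueDiffOn_Iic c c (self_mem_Iic))]
  refine ⟨δ0, hδ0, fun t ht => ?_⟩
  rw [hslope, hmb t ht]
  linear_combination -hab

/-- **Lemma (Statement 4).** For an irreducible `G ≤ PL_o([a,c])`, the homomorphisms
`σ_ℓ` and `σ_r` are both non-trivial on `G` if and only if `G` has a finitely
generated irreducible subgroup. -/
theorem sigma_nontrivial_iff_fg_irreducible_subgroup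
    (a c : ℝ) (hac : a < c)
    (G : Subgroup (Equiv.Perm ℝ)) (hG : (G : Set (Equiv.Perm ℝ)) ⊆ PLo (Icc a c))
    (hirr : ∀ t : ℝ, a < t → t < c → ∃ g ∈ G, g t ≠ t) :
    ((∃ g ∈ G, rightSlope (⇑g) a ≠ 1) ∧ (∃ g ∈ G, leftSlope (⇑g) c ≠ 1)) ↔
      (∃ H : Subgroup (Equiv.Perm ℝ), H ≤ G ∧ H.FG ∧
        ∀ t : ℝ, a < t → t < c → ∃ g ∈ H, g t ≠ t) := by
  classical
  constructor
  · rintro ⟨⟨g1, hg1G, hg1s⟩, ⟨g2, hg2G, hg2s⟩⟩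
    obtain ⟨δ1, hδ1, h1⟩ := slope_right hac.le (hG hg1G)
    obtain ⟨δ2, hδ2, h2⟩ := slope_left hac.le (hG hg2G)
    have hm1 : ∀ t ∈ Ioo a (a + δ1), g1 t ≠ t := by
      intro t ht heq
      apply hg1s
      have h3 : rightSlope (⇑g1) a * (t - a) = 1 * (t - a) := by
        have := h1 t ht
        rw [heq] at this
        linarith
      exact mul_right_cancel₀ (sub_ne_zero.mpr (ne_of_gt ht.1)) h3
    have hm2 : ∀ t ∈ Ioo (c - δ2) c, g2 t ≠ t := by
      intro t ht heq
      apply hg2s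
      have h3 : leftSlope (⇑g2) c * (t - c) = 1 * (t - c) := by
        have := h2 t ht
        rw [heq] at this
        linarith
      exact mul_right_cancel₀ (sub_ne_zero.mpr (ne_of_lt ht.2)) h3
    set p := a + min δ1 (c - a) / 2 with hp
    set q := c - min δ2 (c - a) / 2 with hq
    have hap : a < p := by
      have := lt_min hδ1 (by linarith : (0:ℝ) < c - a); simp only [hp]; linarith
    have hpc : p < c := by
      have := min_le_right δ1 (c - a); simp only [hp]; linarith
    have haq : a < q := by
      have := min_le_right δ2 (c - a); simp only [hq]; linarith
    have hqc : q < c := by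
      have := lt_min hδ2 (by linarith : (0:ℝ) < c - a); simp only [hq]; linarith
    have hsub : ∀ t : Icc p q, ∃ g, g ∈ G ∧ g (t : ℝ) ≠ (t : ℝ) := by
      rintro ⟨t, ht⟩
      obtain ⟨g, hgG, hgne⟩ := hirr t (lt_of_lt_of_le hap ht.1) (lt_of_le_of_lt ht.2 hqc)
      exact ⟨g, hgG, hgne⟩
    choose f hfG hfne using hsub
    have hopen : ∀ i : Icc p q, IsOpen {s : ℝ | f i s ≠ s} := fun i =>
      isOpen_ne_fun (plo_continuous (hG (hfG i))) continuous_id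
    have hcover : Icc p q ⊆ ⋃ i, {s : ℝ | f i s ≠ s} := fun s hs =>
      mem_iUnion.mpr ⟨⟨s, hs⟩, hfne ⟨s, hs⟩⟩
    obtain ⟨F, hF⟩ := isCompact_Icc.elim_finite_subcover _ hopen hcover
    set X : Set (Equiv.Perm ℝ) := {g1, g2} ∪ ↑(F.image f) with hX
    have hXG : X ⊆ (G : Set (Equiv.Perm ℝ)) := by
      rintro x (hx | hx)
      · rcases hx with hx | hx
        · rw [hx]; exact hg1G
        · rw [hx]; exact hg2G
      · obtain ⟨i, _, rfl⟩ := Finset.mem_image.mp hx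
        exact hfG i
    refine ⟨Subgroup.closure X, (Subgroup.closure_le G).mpr hXG, ?_, ?_⟩
    · exact (Subgroup.fg_iff _).mpr ⟨X, rfl,
        (Set.toFinite ({g1, g2} : Set (Equiv.Perm ℝ))).union (F.image f).finite_toSet⟩
    · intro t hta htc
      rcases lt_or_ge t p with h | h
      · refine ⟨g1, Subgroup.subset_closure (by simp [hX]), hm1 t ⟨hta, ?_⟩⟩
        have := min_le_left δ1 (c - a)
        simp only [hp] at h
        linarith
      rcases lt_or_ge q t with h' | h'
      · refine ⟨g2, Subgroup.subset_closure (by simp [hX]), hm2 t ⟨?_, htc⟩⟩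
        have := min_le_left δ2 (c - a)
        simp only [hq] at h'
        linarith
      · have hmem := hF ⟨h, h'⟩
        rw [mem_iUnion₂] at hmem
        obtain ⟨i, hiF, hit⟩ := hmem
        exact ⟨f i, Subgroup.subset_closure
          (Or.inr (Finset.mem_coe.mpr (Finset.mem_image_of_mem f hiF))), hit⟩
  · rintro ⟨H, hHG, hFG, hHirr⟩
    obtain ⟨S, hSclos, hSfin⟩ := (Subgroup.fg_iff H).mp hFG
    set S' := hSfin.toFinset with hS'
    have hSH : ∀ s ∈ S', s ∈ H := fun s hs =>
      hSclos ▸ Subgroup.subset_closure (hSfin.mem_toFinset.mp hs)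
    have hfixpoint : ∀ t0 : ℝ, (∀ s ∈ S', s t0 = t0) → ∀ g ∈ H, g t0 = t0 := by
      intro t0 hfix g hg
      rw [← hSclos] at hg
      refine Subgroup.closure_induction (p := fun g _ => g t0 = t0)
        (fun x hx => hfix x (hSfin.mem_toFinset.mpr hx)) (by simp)
        (fun x y _ _ hx hy => by
          show (x * y) t0 = t0
          rw [Equiv.Perm.mul_apply, hy, hx])
        (fun x _ hx => by
          show x⁻¹ t0 = t0
          nth_rewrite 1 [← hx]
          exact Equiv.symm_apply_apply x t0) hg
    constructor
    · by_contra hcon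
      push_neg at hcon
      obtain ⟨δ, hδ, hcommon⟩ : ∃ δ > 0, ∀ s ∈ S', ∀ t ∈ Ioo a (a + δ), s t = t := by
        apply finset_common_delta S' (fun s δ => ∀ t ∈ Ioo a (a + δ), s t = t)
        · intro s δ δ' _ hle hs t ht
          exact hs t ⟨ht.1, lt_of_lt_of_le ht.2 (by linarith)⟩
        · intro s hs
          have hsG : s ∈ G := hHG (hSH s hs)
          obtain ⟨δ, hδ, hform⟩ := slope_right hac.le (hG hsG)
          exact ⟨δ, hδ, fun t ht => by rw [hform t ht, hcon s hsG]; ring⟩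
      set t0 := a + min δ (c - a) / 2 with ht0
      have h1 : a < t0 := by
        have := lt_min hδ (by linarith : (0:ℝ) < c - a); simp only [ht0]; linarith
      have h2 : t0 < c := by
        have := min_le_right δ (c - a); simp only [ht0]; linarith
      have h3 : t0 ∈ Ioo a (a + δ) := by
        refine ⟨h1, ?_⟩
        have := min_le_left δ (c - a); simp only [ht0]; linarith
      obtain ⟨g, hgH, hgne⟩ := hHirr t0 h1 h2
      exact hgne (hfixpoint t0 (fun s hs => hcommon s hs t0 h3) g hgH)
    · by_contra hcon
      push_neg at hcon
      obtain ⟨δ, hδ, hcommon⟩ : ∃ δ > 0, ∀ s ∈ S', ∀ t ∈ Ioo (c - δ) c, s t = t := by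
        apply finset_common_delta S' (fun s δ => ∀ t ∈ Ioo (c - δ) c, s t = t)
        · intro s δ δ' _ hle hs t ht
          exact hs t ⟨lt_of_le_of_lt (by linarith) ht.1, ht.2⟩
        · intro s hs
          have hsG : s ∈ G := hHG (hSH s hs)
          obtain ⟨δ, hδ, hform⟩ := slope_left hac.le (hG hsG)
          exact ⟨δ, hδ, fun t ht => by rw [hform t ht, hcon s hsG]; ring⟩
      set t0 := c - min δ (c - a) / 2 with ht0
      have h1 : a < t0 := by
        have := min_le_right δ (c - a); simp only [ht0]; linarith
      have h2 : t0 < c := by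
        have := lt_min hδ (by linarith : (0:ℝ) < c - a); simp only [ht0]; linarith
      have h3 : t0 ∈ Ioo (c - δ) c := by
        refine ⟨?_, h2⟩
        have := min_le_left δ (c - a); simp only [ht0]; linarith
      obtain ⟨g, hgH, hgne⟩ := hHirr t0 h1 h2
      exact hgne (hfixpoint t0 (fun s hs => hcommon s hs t0 h3) g hgH)
end

section
/- Let G be a group and χ : G → ℝ a non-zero character. Suppose G is the union of a collection {G_j : j ∈ J} of finitely generated subgroups such that: (i) for every j ∈ J the restriction χ_j = χ|G_j is non-zero and [χ_j] ∈ Σ¹(G_j); and (ii) the combinatorial graph with vertex set J and with an edge {j₁, j₂} whenever χ(G_{j₁} ∩ G_{j₂}) ≠ {0} is connected. Then [χ] ∈ Σ¹(G). -/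
open Set

namespace Sigma1UnionAux

variable {Γ : Type*} [Group Γ]

lemma char_one {χ : Γ → ℝ} (hχ : IsChar χ) : χ 1 = 0 := by
  have h := hχ 1 1
  rw [one_mul] at h
  linarith

lemma char_inv {χ : Γ → ℝ} (hχ : IsChar χ) (g : Γ) : χ g⁻¹ = -χ g := by
  have h := hχ g g⁻¹
  rw [show g * g⁻¹ = 1 from by group, char_one hχ] at h
  linarith

lemma char_pow {χ : Γ → ℝ} (hχ : IsChar χ) (g : Γ) : ∀ m : ℕ, χ (g ^ m) = m * χ g
  | 0 => by simpa using char_one hχ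
  | (m + 1) => by
      rw [pow_succ, hχ, char_pow hχ g m]
      push_cast
      ring

/-- One step of the Cayley subgraph. -/
abbrev Step (χ : Γ → ℝ) (X : Set Γ) : Γ → Γ → Prop :=
  fun u v => 0 ≤ χ u ∧ 0 ≤ χ v ∧ ∃ x ∈ X, v = u * x ∨ u = v * x

/-- Connectivity in the Cayley subgraph. -/
abbrev Conn (χ : Γ → ℝ) (X : Set Γ) : Γ → Γ → Prop :=
  Relation.ReflTransGen (Step χ X)

lemma conn_symm {χ : Γ → ℝ} {X : Set Γ} {u v : Γ} (h : Conn χ X u v) : Conn χ X v u := by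
  induction h with
  | refl => exact Relation.ReflTransGen.refl
  | tail _ hbc ih =>
      refine Relation.ReflTransGen.head ?_ ih
      obtain ⟨h1, h2, x, hx, hca⟩ := hbc
      exact ⟨h2, h1, x, hx, hca.symm⟩

/-- Every element can be "reached" by a nonnegative path from any sufficiently high
base point. -/
lemma conn_reach {χ : Γ → ℝ} (hχ : IsChar χ) {X : Set Γ} (hX : Subgroup.closure X = ⊤)
    (z : Γ) : ∃ M : ℝ, 0 ≤ M ∧ ∀ p : Γ, M ≤ χ p → Conn χ X p (p * z) := by
  have hz : z ∈ Subgroup.closure X := by rw [hX]; trivial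
  induction hz using Subgroup.closure_induction with
  | mem x hx =>
      refine ⟨max 0 (-χ x), le_max_left _ _, fun p hp => ?_⟩
      have h1 : 0 ≤ χ p := le_trans (le_max_left _ _) hp
      have h2 : 0 ≤ χ (p * x) := by
        rw [hχ]
        have := le_trans (le_max_right _ _) hp
        linarith
      exact Relation.ReflTransGen.single ⟨h1, h2, x, hx, Or.inl rfl⟩
  | one =>
      exact ⟨0, le_refl _, fun p _ => by rw [mul_one]⟩
  | mul x y hx hy ihx ihy =>
      obtain ⟨M₁, hM₁0, hM₁⟩ := ihx
      obtain ⟨M₂, hM₂0, hM₂⟩ := ihy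
      refine ⟨max M₁ (M₂ - χ x), le_trans hM₁0 (le_max_left _ _), fun p hp => ?_⟩
      have h1 : Conn χ X p (p * x) := hM₁ p (le_trans (le_max_left _ _) hp)
      have h2 : Conn χ X (p * x) ((p * x) * y) := by
        refine hM₂ (p * x) ?_
        rw [hχ]
        have := le_trans (le_max_right _ _) hp
        linarith
      rw [← mul_assoc]
      exact h1.trans h2
  | inv x hx ih =>
      obtain ⟨M, hM0, hM⟩ := ih
      refine ⟨max 0 (M + χ x), le_max_left _ _, fun p hp => ?_⟩
      have h1 : M ≤ χ (p * x⁻¹) := by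
        rw [hχ, char_inv hχ]
        have := le_trans (le_max_right _ _) hp
        linarith
      have h2 := hM (p * x⁻¹) h1
      rw [inv_mul_cancel_right] at h2
      exact conn_symm h2

/-- A "good" element: every edge labelled by it, with nonnegative endpoints, can be
realized by a nonnegative path in the Cayley subgraph. -/
def DGood (χ : Γ → ℝ) (X : Set Γ) (z : Γ) : Prop :=
  ∀ u : Γ, 0 ≤ χ u → 0 ≤ χ (u * z) → Conn χ X u (u * z)

lemma dgood_gen {χ : Γ → ℝ} {X : Set Γ} {x : Γ} (hx : x ∈ X) : DGood χ X x :=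
  fun _ hu hux => Relation.ReflTransGen.single ⟨hu, hux, x, hx, Or.inl rfl⟩

lemma dgood_inv {χ : Γ → ℝ} {X : Set Γ} {z : Γ} (hz : DGood χ X z) : DGood χ X z⁻¹ := by
  intro u hu huz
  have h := hz (u * z⁻¹) huz (by rw [inv_mul_cancel_right]; exact hu)
  rw [inv_mul_cancel_right] at h
  exact conn_symm h

lemma dgood_climb {χ : Γ → ℝ} (hχ : IsChar χ) {X : Set Γ} {t : Γ}
    (ht : DGood χ X t) (htpos : 0 < χ t) :
    ∀ u : Γ, 0 ≤ χ u → ∀ m : ℕ, Conn χ X u (u * t ^ m) := by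
  intro u hu m
  induction m with
  | zero => simpa using Relation.ReflTransGen.refl
  | succ m ih =>
      have hm : (0 : ℝ) ≤ m := Nat.cast_nonneg m
      have h1 : 0 ≤ χ (u * t ^ m) := by
        rw [hχ, char_pow hχ]
        nlinarith
      have h2 : 0 ≤ χ ((u * t ^ m) * t) := by
        rw [hχ]
        linarith
      have hstep := ht (u * t ^ m) h1 h2
      rw [pow_succ, ← mul_assoc]
      exact ih.trans hstep

lemma dgood_pow {χ : Γ → ℝ} (hχ : IsChar χ) {X : Set Γ} {t : Γ}
    (ht : DGood χ X t) (htpos : 0 < χ t) (m : ℕ) : DGood χ X (t ^ m) :=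
  fun u hu _ => dgood_climb hχ ht htpos u hu m

lemma dgood_high {χ : Γ → ℝ} (hχ : IsChar χ) {X : Set Γ} (hX : Subgroup.closure X = ⊤)
    {t : Γ} (ht : DGood χ X t) (htpos : 0 < χ t) (w : Γ) :
    ∃ m : ℕ, DGood χ X (t ^ m * w) := by
  obtain ⟨M, hM0, hM⟩ := conn_reach hχ hX w
  obtain ⟨m, hm⟩ := exists_nat_ge (M / χ t)
  refine ⟨m, fun u hu _ => ?_⟩
  have hmM : M ≤ (m : ℝ) * χ t := by
    rw [← div_le_iff₀ htpos] at *
    exact hm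
  have h1 : M ≤ χ (u * t ^ m) := by
    rw [hχ, char_pow hχ]
    linarith
  have h2 := hM (u * t ^ m) h1
  rw [← mul_assoc]
  exact (dgood_climb hχ ht htpos u hu m).trans h2

/-- The core transfer: if a subgroup `H` has a good seed element of positive character
value and `χ|H` lies in `Σ¹(H)`, then every element of `H` with nonnegative character
value can be reached from any nonnegative base point. -/
lemma core {χ : Γ → ℝ} (hχ : IsChar χ) {X : Set Γ} (hX : Subgroup.closure X = ⊤)
    (H : Subgroup Γ) (hσ : MemSigma1 (fun g : H => χ (g : Γ)))
    {t : Γ} (htH : t ∈ H) (htD : DGood χ X t) (htpos : 0 < χ t) :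
    ∀ z ∈ H, 0 ≤ χ z → ∀ u : Γ, 0 ≤ χ u → Conn χ X u (u * z) := by
  intro z hzH hz u hu
  set W : Set H := {w : H | DGood χ X (w : Γ)} with hWdef
  have hWtop : Subgroup.closure W = ⊤ := by
    rw [eq_top_iff]
    rintro ⟨y, hy⟩ -
    obtain ⟨m, hm⟩ := dgood_high hχ hX htD htpos y
    have hb : ((⟨t, htH⟩ : H) ^ m) ∈ Subgroup.closure W := by
      apply Subgroup.subset_closure
      show DGood χ X _
      have hco : (((⟨t, htH⟩ : H) ^ m : H) : Γ) = t ^ m := by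
        simp
      rw [hco]
      exact dgood_pow hχ htD htpos m
    have ha : (⟨t ^ m * y, mul_mem (pow_mem htH m) hy⟩ : H) ∈ Subgroup.closure W := by
      apply Subgroup.subset_closure
      exact hm
    have hyeq : (⟨y, hy⟩ : H)
        = ((⟨t, htH⟩ : H) ^ m)⁻¹ * ⟨t ^ m * y, mul_mem (pow_mem htH m) hy⟩ := by
      apply Subtype.ext
      simp [inv_mul_cancel_left]
    rw [hyeq]
    exact mul_mem (inv_mem hb) ha
  have hpath := hσ W hWtop 1 ⟨z, hzH⟩ (by simpa using (char_one hχ).ge) hz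
  have key : ∀ a b : H,
      Relation.ReflTransGen
        (fun u v : H => 0 ≤ χ (u : Γ) ∧ 0 ≤ χ (v : Γ) ∧ ∃ x ∈ W, v = u * x ∨ u = v * x)
        a b → Conn χ X (u * a) (u * b) := by
    intro a b hab
    induction hab with
    | refl => exact Relation.ReflTransGen.refl
    | @tail b c _ hbc ih =>
        obtain ⟨h1, h2, w, hwW, hcase⟩ := hbc
        rcases hcase with hc | hc
        · have he : u * (c : Γ) = (u * (b : Γ)) * (w : Γ) := by
            rw [hc, Subgroup.coe_mul, mul_assoc]
          have hd := hwW (u * (b : Γ)) (by rw [hχ]; linarith)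
            (by rw [← he, hχ]; linarith)
          rw [← he] at hd
          exact ih.trans hd
        · have he : u * (b : Γ) = (u * (c : Γ)) * (w : Γ) := by
            rw [hc, Subgroup.coe_mul, mul_assoc]
          have hd := hwW (u * (c : Γ)) (by rw [hχ]; linarith)
            (by rw [← he, hχ]; linarith)
          rw [← he] at hd
          exact ih.trans (conn_symm hd)
  have := key 1 ⟨z, hzH⟩ hpath
  simpa using this

lemma dgood_of_mem {χ : Γ → ℝ} (hχ : IsChar χ) {X : Set Γ} (hX : Subgroup.closure X = ⊤)
    (H : Subgroup Γ) (hσ : MemSigma1 (fun g : H => χ (g : Γ)))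
    {t : Γ} (htH : t ∈ H) (htD : DGood χ X t) (htpos : 0 < χ t) :
    ∀ z ∈ H, DGood χ X z := by
  intro z hzH
  rcases le_or_gt 0 (χ z) with h | h
  · exact fun u hu _ => core hχ hX H hσ htH htD htpos z hzH h u hu
  · have hinv : DGood χ X z⁻¹ := fun u hu _ =>
      core hχ hX H hσ htH htD htpos z⁻¹ (inv_mem hzH)
        (by rw [char_inv hχ]; linarith) u hu
    have := dgood_inv hinv
    rwa [inv_inv] at this

end Sigma1UnionAux

open Sigma1UnionAux
/-- **Proposition (Statement 5).** If `G` is a union of finitely generated subgroups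
`G_j` on each of which the non-zero character `χ` restricts non-trivially to a point
of `Σ¹(G_j)`, and the graph on `J` with edges `{j₁,j₂}` whenever
`χ(G_{j₁} ∩ G_{j₂}) ≠ {0}` is connected, then `[χ] ∈ Σ¹(G)`. -/
theorem memSigma1_of_union_of_fg_subgroups
    {Γ : Type*} [Group Γ] (χ : Γ → ℝ) (hχ : IsChar χ) (hne : χ ≠ 0)
    {J : Type*} (𝒢 : J → Subgroup Γ)
    (hunion : ∀ g : Γ, ∃ j : J, g ∈ 𝒢 j)
    (hfg : ∀ j : J, (𝒢 j).FG)
    (hres : ∀ j : J, (∃ g : 𝒢 j, χ (g : Γ) ≠ 0) ∧ MemSigma1 (fun g : 𝒢 j => χ (g : Γ)))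
    (hconn : ∀ j₁ j₂ : J, Relation.ReflTransGen
        (fun i₁ i₂ : J => ∃ g : Γ, g ∈ 𝒢 i₁ ⊓ 𝒢 i₂ ∧ χ g ≠ 0) j₁ j₂) :
    MemSigma1 χ := by
  intro X hX g h hg hh
  -- there is a generator with nonzero character value
  have hx0 : ∃ x ∈ X, χ x ≠ 0 := by
    by_contra hc
    push_neg at hc
    apply hne
    funext a
    show χ a = 0
    have ha : a ∈ Subgroup.closure X := by rw [hX]; trivial
    induction ha using Subgroup.closure_induction with
    | mem x hx => exact hc x hx
    | one => exact char_one hχ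
    | mul x y hx hy ihx ihy => rw [hχ, ihx, ihy, add_zero]
    | inv x hx ih => rw [char_inv hχ, ih, neg_zero]
  obtain ⟨x, hxX, hxne⟩ := hx0
  -- a good seed of positive character value
  have hseed0 : ∃ s : Γ, DGood χ X s ∧ 0 < χ s := by
    rcases hxne.lt_or_gt with hlt | hgt
    · exact ⟨x⁻¹, dgood_inv (dgood_gen hxX), by rw [char_inv hχ]; linarith⟩
    · exact ⟨x, dgood_gen hxX, hgt⟩
  obtain ⟨s, hsD, hspos⟩ := hseed0
  obtain ⟨j₀, hj₀⟩ := hunion s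
  -- propagate seeds along the graph on J
  have hP : ∀ j : J, ∃ t : Γ, t ∈ 𝒢 j ∧ DGood χ X t ∧ 0 < χ t := by
    intro j
    have hcj := hconn j₀ j
    induction hcj with
    | refl => exact ⟨s, hj₀, hsD, hspos⟩
    | @tail j₁ j₂ _ he ih =>
        obtain ⟨t, htm, htD, htpos⟩ := ih
        obtain ⟨w, hwm, hwne⟩ := he
        rw [Subgroup.mem_inf] at hwm
        have hwD : DGood χ X w :=
          dgood_of_mem hχ hX (𝒢 j₁) (hres j₁).2 htm htD htpos w hwm.1
        rcases hwne.lt_or_gt with hlt | hgt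
        · exact ⟨w⁻¹, inv_mem hwm.2, dgood_inv hwD, by rw [char_inv hχ]; linarith⟩
        · exact ⟨w, hwm.2, hwD, hgt⟩
  -- every nonnegative vertex is connected to the identity
  have hone : ∀ a : Γ, 0 ≤ χ a → Conn χ X 1 a := by
    intro a ha
    obtain ⟨j, hj⟩ := hunion a
    obtain ⟨t, htm, htD, htpos⟩ := hP j
    have hc := core hχ hX (𝒢 j) (hres j).2 htm htD htpos a hj ha 1
      (le_of_eq (char_one hχ).symm)
    rwa [one_mul] at hc
  exact (conn_symm (hone g hg)).trans (hone h hh)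
end

section
/- Let G be a group, χ : G → ℝ a non-zero character, and set G_χ = {g ∈ G : χ(g) ≥ 0}. Suppose G_χ contains a submonoid M with M ∩ ker χ = M ∩ M⁻¹, (M·M⁻¹) ∩ G_χ = M, and M generates G as a group. If M is properly contained in G_χ, then [χ] ∉ Σ¹(G); that is, there exists a generating set X of G for which the subgraph Γ(G,X)_χ is not connected. -/
open Set

/-- **Proposition (Statement 6).** Let `χ` be a non-zero character of `G` and suppose
the submonoid `G_χ = {g : χ(g) ≥ 0}` contains a submonoid `M` with
`M ∩ ker χ = M ∩ M⁻¹`, `(M·M⁻¹) ∩ G_χ = M` and `gp(M) = G`. If `M ⊊ G_χ`, then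
`[χ] ∉ Σ¹(G)`. -/
theorem not_memSigma1_of_proper_submonoid
    {Γ : Type*} [Group Γ] (χ : Γ → ℝ) (hχ : IsChar χ) (hne : χ ≠ 0)
    (M : Submonoid Γ)
    (hsub : (M : Set Γ) ⊆ {g : Γ | 0 ≤ χ g})
    (hker : {g : Γ | g ∈ M ∧ χ g = 0} = {g : Γ | g ∈ M ∧ g⁻¹ ∈ M})
    (hquot : {g : Γ | (∃ m₁ ∈ M, ∃ m₂ ∈ M, g = m₁ * m₂⁻¹) ∧ 0 ≤ χ g} = (M : Set Γ))
    (hgen : Subgroup.closure (M : Set Γ) = ⊤)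
    (hproper : ∃ g : Γ, 0 ≤ χ g ∧ g ∉ M) :
    ¬ MemSigma1 χ := by
  intro hmem
  obtain ⟨g, hg0, hgM⟩ := hproper
  have h1 : χ 1 = 0 := by
    have := hχ 1 1; simp only [one_mul] at this; linarith
  have hpath := hmem (M : Set Γ) hgen 1 g (by rw [h1]) hg0
  have key : ∀ h : Γ,
      Relation.ReflTransGen
        (fun u v : Γ => 0 ≤ χ u ∧ 0 ≤ χ v ∧ ∃ x ∈ (M : Set Γ), v = u * x ∨ u = v * x)
        1 h → h ∈ M := by
    intro h hr
    induction hr with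
    | refl => exact M.one_mem
    | @tail b c _ hstep ih =>
      obtain ⟨_, hc0, x, hxM, hcase⟩ := hstep
      rcases hcase with heq | heq
      · rw [heq]; exact M.mul_mem ih hxM
      · have hc : c ∈ ({g : Γ | (∃ m₁ ∈ M, ∃ m₂ ∈ M, g = m₁ * m₂⁻¹) ∧ 0 ≤ χ g}) := by
          refine ⟨⟨b, ih, x, hxM, ?_⟩, hc0⟩
          rw [heq]; group
        rwa [hquot] at hc
  exact hgM (key g hpath)
end

section
/- Let G be a finitely generated subgroup of PL_o([a,c]), where a < c, and let χ : G → ℝ be a non-zero character. Assume G contains elements f and h with χ(f) > 0 and χ(h) > 0 that satisfy, for some δ > 0, one of the following two conditions: (i) f is linear on [a, a+δ] with slope < 1 and the support of h is contained in [a, a+δ]; or (ii) f is affine on [c−δ, c] with slope < 1 and the support of h is contained in [c−δ, c]. Then [χ] ∈ Σ¹(G). -/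
open Set

set_option linter.unusedSectionVars false

namespace S9

variable {Γ : Type*} [Group Γ]

section chi
variable {χ : Γ → ℝ} (hχ : IsChar χ)

lemma chi_one (hχ : IsChar χ) : χ 1 = 0 := by
  have := hχ 1 1; simp at this; linarith [this]

lemma chi_inv (hχ : IsChar χ) (g : Γ) : χ g⁻¹ = - χ g := by
  have := hχ g g⁻¹; simp [chi_one hχ] at this; linarith

lemma chi_prod (hχ : IsChar χ) : ∀ l : List Γ, χ l.prod = (l.map χ).sum
  | [] => by simp [chi_one hχ]
  | y :: l => by simp [hχ y l.prod, chi_prod hχ l]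

end chi

section lists
variable (χ : Γ → ℝ)

/-- prefix sum of χ over the first `n` letters -/
noncomputable def PS (l : List Γ) (n : ℕ) : ℝ := ((l.take n).map χ).sum
noncomputable def TS (l : List Γ) : ℝ := (l.map χ).sum
noncomputable def AS (l : List Γ) : ℝ := (l.map fun y => |χ y|).sum

@[simp] lemma PS_zero (l : List Γ) : PS χ l 0 = 0 := by simp [PS]

lemma PS_of_le (l : List Γ) {n : ℕ} (h : l.length ≤ n) : PS χ l n = TS χ l := by
  simp [PS, TS, List.take_of_length_le h]

lemma AS_nonneg (l : List Γ) : 0 ≤ AS χ l := by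
  apply List.sum_nonneg; intro x hx
  simp only [List.mem_map] at hx; obtain ⟨y, _, rfl⟩ := hx; positivity

lemma PS_bounds (l : List Γ) : ∀ n : ℕ, -AS χ l ≤ PS χ l n ∧ PS χ l n ≤ AS χ l := by
  induction l with
  | nil => intro n; simp [PS, AS]
  | cons y l ih =>
    intro n
    cases n with
    | zero =>
      have h0 := AS_nonneg χ (y :: l)
      simp only [PS_zero]
      exact ⟨by linarith, h0⟩
    | succ n =>
      have h : PS χ (y :: l) (n+1) = χ y + PS χ l n := by simp [PS]
      have hA : AS χ (y :: l) = |χ y| + AS χ l := by simp [AS]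
      obtain ⟨h1, h2⟩ := ih n
      constructor
      · rw [h, hA]; have := neg_abs_le (χ y); linarith
      · rw [h, hA]; have := le_abs_self (χ y); linarith

lemma neg_AS_le_PS (l : List Γ) (n : ℕ) : -AS χ l ≤ PS χ l n := (PS_bounds χ l n).1

lemma TS_le_AS (l : List Γ) : TS χ l ≤ AS χ l := by
  have := (PS_bounds χ l l.length).2
  rwa [PS_of_le χ l le_rfl] at this

lemma neg_AS_le_TS (l : List Γ) : -AS χ l ≤ TS χ l := by
  have := (PS_bounds χ l l.length).1
  rwa [PS_of_le χ l le_rfl] at this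

lemma PS_append (l₁ l₂ : List Γ) (n : ℕ) :
    PS χ (l₁ ++ l₂) n = PS χ l₁ n + PS χ l₂ (n - l₁.length) := by
  simp [PS, List.take_append]

lemma TS_append (l₁ l₂ : List Γ) : TS χ (l₁ ++ l₂) = TS χ l₁ + TS χ l₂ := by
  simp [TS]

/-- k-fold repetition of a list -/
def jr (k : ℕ) (l : List Γ) : List Γ := (List.replicate k l).flatten

/-- the reversed list of inverses -/
def ri (l : List Γ) : List Γ := (l.map fun y => y⁻¹).reverse

@[simp] lemma jr_zero (l : List Γ) : jr 0 l = [] := rfl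
lemma jr_succ (k : ℕ) (l : List Γ) : jr (k+1) l = l ++ jr k l := by
  simp [jr, List.replicate_succ]

lemma jr_prod (k : ℕ) (l : List Γ) : (jr k l).prod = l.prod ^ k := by
  induction k with
  | zero => simp
  | succ k ih => rw [jr_succ, List.prod_append, ih, ← pow_succ']

lemma ri_prod (l : List Γ) : (ri l).prod = l.prod⁻¹ := by
  rw [ri, ← List.prod_inv_reverse]

lemma TS_jr (k : ℕ) (l : List Γ) : TS χ (jr k l) = k * TS χ l := by
  induction k with
  | zero => simp [TS]
  | succ k ih => rw [jr_succ, TS_append, ih]; push_cast; ring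

lemma PS_jr_ge (k : ℕ) (l : List Γ) (n : ℕ) :
    k * min 0 (TS χ l) - AS χ l ≤ PS χ (jr k l) n := by
  induction k generalizing n with
  | zero =>
    have := AS_nonneg χ l
    simp [PS]
    nlinarith [min_le_left (0:ℝ) (TS χ l)]
  | succ k ih =>
    rw [jr_succ, PS_append]
    have h1 := neg_AS_le_PS χ l n
    have h2 := ih (n - l.length)
    have h3 : min 0 (TS χ l) ≤ 0 := min_le_left _ _
    have h4 : min 0 (TS χ l) ≤ TS χ l := min_le_right _ _
    have hk : (0:ℝ) ≤ k := Nat.cast_nonneg k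
    rcases le_or_gt (n:ℕ) l.length with h | h
    · have : n - l.length = 0 := Nat.sub_eq_zero_of_le h
      rw [this] at *
      simp only [PS_zero] at *
      push_cast
      nlinarith
    · have hfull : PS χ l n = TS χ l := PS_of_le χ l (le_of_lt h)
      rw [hfull]
      push_cast
      nlinarith

lemma PS_nonneg_of_letters (l : List Γ) (h : ∀ y ∈ l, 0 ≤ χ y) (n : ℕ) : 0 ≤ PS χ l n := by
  apply List.sum_nonneg
  intro x hx
  simp only [List.mem_map] at hx
  obtain ⟨y, hy, rfl⟩ := hx
  exact h y (List.mem_of_mem_take hy)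

/-- descending sorted lists have prefix sums ≥ min 0 total -/
lemma PS_sorted_ge (l : List Γ) (hs : l.Pairwise (fun x y => χ y ≤ χ x)) (n : ℕ) :
    min 0 (TS χ l) ≤ PS χ l n := by
  induction l using List.reverseRecOn generalizing n with
  | nil => simp [PS, TS]
  | append_singleton l x ih =>
    have hs' : l.Pairwise (fun x y => χ y ≤ χ x) := hs.sublist (by simp)
    rcases le_or_gt (χ x) 0 with hx | hx
    · -- last element nonpositive
      have hT : TS χ (l ++ [x]) = TS χ l + χ x := by simp [TS]
      rcases le_or_gt n l.length with h | h
      · have : PS χ (l ++ [x]) n = PS χ l n := by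
          rw [PS_append]
          have : n - l.length = 0 := Nat.sub_eq_zero_of_le h
          rw [this]; simp
        rw [this]
        refine le_trans ?_ (ih hs' n)
        rw [hT]
        exact min_le_min le_rfl (by linarith)
      · have : PS χ (l ++ [x]) n = TS χ (l ++ [x]) := PS_of_le χ _ (by simp; omega)
        rw [this]
        exact min_le_right _ _
    · -- last element positive: all elements positive
      have hall : ∀ y ∈ l ++ [x], 0 ≤ χ y := by
        intro y hy
        rcases List.mem_append.mp hy with hy | hy
        · have : χ x ≤ χ y := by
            have := List.pairwise_append.mp hs
            exact (this.2.2 y hy x (by simp))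
          linarith
        · simp at hy; subst hy; linarith
      have := PS_nonneg_of_letters χ _ hall n
      exact le_trans (min_le_left _ _) this

lemma TS_ri (hχ : IsChar χ) (l : List Γ) : TS χ (ri l) = - TS χ l := by
  simp [ri, TS, List.sum_reverse, List.map_map]
  induction l with
  | nil => simp
  | cons y l ih => simp [Function.comp, chi_inv hχ] at *; linarith

lemma AS_ri (hχ : IsChar χ) (l : List Γ) : AS χ (ri l) = AS χ l := by
  simp [ri, AS, List.sum_reverse, List.map_map]
  induction l with
  | nil => simp
  | cons y l ih => simp [Function.comp, chi_inv hχ] at *; linarith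

lemma ri_sorted (hχ : IsChar χ) (l : List Γ) (hs : l.Pairwise (fun x y => χ y ≤ χ x)) :
    (ri l).Pairwise (fun x y => χ y ≤ χ x) := by
  unfold ri
  rw [List.pairwise_reverse, List.pairwise_map]
  apply List.Pairwise.imp ?_ hs
  intro a b hab
  simp only [chi_inv hχ]
  linarith

lemma mem_ri {l : List Γ} {z : Γ} (hz : z ∈ ri l) : ∃ y ∈ l, z = y⁻¹ := by
  simp only [ri, List.mem_reverse, List.mem_map] at hz
  obtain ⟨y, hy, rfl⟩ := hz
  exact ⟨y, hy, rfl⟩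

end lists

section path
variable (X : Set Γ)

def Lett (l : List Γ) : Prop := ∀ y ∈ l, y ∈ X ∨ y⁻¹ ∈ X

lemma Lett_append {l₁ l₂ : List Γ} (h1 : Lett X l₁) (h2 : Lett X l₂) : Lett X (l₁ ++ l₂) := by
  intro y hy; rcases List.mem_append.mp hy with h | h; exacts [h1 y h, h2 y h]

lemma Lett_jr {l : List Γ} (h : Lett X l) (k : ℕ) : Lett X (jr k l) := by
  induction k with
  | zero => intro y hy; simp [jr] at hy
  | succ k ih => rw [jr_succ]; exact Lett_append X h ih

lemma Lett_ri {l : List Γ} (h : Lett X l) : Lett X (ri l) := by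
  intro z hz
  obtain ⟨y, hy, rfl⟩ := mem_ri hz
  rcases h y hy with h' | h'
  · right; simpa using h'
  · left; exact h'

lemma Lett_replicate {y : Γ} (h : y ∈ X ∨ y⁻¹ ∈ X) (k : ℕ) : Lett X (List.replicate k y) := by
  intro z hz
  rw [List.eq_of_mem_replicate hz]
  exact h

lemma Lett_perm {l₁ l₂ : List Γ} (h : l₁.Perm l₂) (h1 : Lett X l₁) : Lett X l₂ := by
  intro y hy; exact h1 y (h.symm.subset hy)

/-- the Cayley-graph step relation -/
def Rel (χ : Γ → ℝ) (u v : Γ) : Prop :=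
  0 ≤ χ u ∧ 0 ≤ χ v ∧ ∃ x ∈ X, v = u * x ∨ u = v * x

lemma Rel_symm (χ : Γ → ℝ) : Symmetric (Rel X χ) := by
  rintro u v ⟨h1, h2, x, hx, h | h⟩
  exacts [⟨h2, h1, x, hx, Or.inr h⟩, ⟨h2, h1, x, hx, Or.inl h⟩]

lemma path_of_good {χ : Γ → ℝ} (hχ : IsChar χ) (u : Γ) (l : List Γ)
    (hl : Lett X l) (hg : ∀ n : ℕ, 0 ≤ χ u + PS χ l n) :
    Relation.ReflTransGen (Rel X χ) u (u * l.prod) := by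
  induction l generalizing u with
  | nil => simpa using Relation.ReflTransGen.refl
  | cons y l ih =>
    have hu : 0 ≤ χ u := by simpa using hg 0
    have huy : 0 ≤ χ (u * y) := by
      have := hg 1
      rw [hχ]
      simpa [PS] using this
    have step : Rel X χ u (u * y) := by
      refine ⟨hu, huy, ?_⟩
      rcases hl y (by simp) with h | h
      · exact ⟨y, h, Or.inl rfl⟩
      · exact ⟨y⁻¹, h, Or.inr (by group)⟩
    have tail : Relation.ReflTransGen (Rel X χ) (u * y) (u * y * l.prod) := by
      apply ih (u * y) (fun z hz => hl z (by simp [hz]))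
      intro n
      have := hg (n + 1)
      rw [hχ]
      simp only [PS] at this ⊢
      simp at this ⊢
      linarith
    have : u * (y :: l).prod = u * y * l.prod := by
      rw [List.prod_cons, mul_assoc]
    rw [this]
    exact Relation.ReflTransGen.head step tail

lemma exists_word (hX : Subgroup.closure X = ⊤) (g : Γ) :
    ∃ l : List Γ, Lett X l ∧ l.prod = g := by
  have hg : g ∈ Subgroup.closure X := by rw [hX]; trivial
  refine Subgroup.closure_induction ?_ ?_ ?_ ?_ hg
  · intro x hx
    exact ⟨[x], fun y hy => by simp at hy; subst hy; exact Or.inl hx, by simp⟩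
  · exact ⟨[], by intro y hy; simp at hy, by simp⟩
  · rintro x y _ _ ⟨l1, hl1, rfl⟩ ⟨l2, hl2, rfl⟩
    exact ⟨l1 ++ l2, Lett_append X hl1 hl2, by simp⟩
  · rintro x _ ⟨l, hl, rfl⟩
    exact ⟨ri l, Lett_ri X hl, ri_prod l⟩

lemma exists_pos_letter {χ : Γ → ℝ} (hχ : IsChar χ) (hX : Subgroup.closure X = ⊤)
    (hne : χ ≠ 0) : ∃ y₀ : Γ, (y₀ ∈ X ∨ y₀⁻¹ ∈ X) ∧ 0 < χ y₀ := by
  by_contra hcon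
  push_neg at hcon
  apply hne
  funext g
  obtain ⟨l, hl, rfl⟩ := exists_word X hX g
  have hz : ∀ x, (x ∈ X ∨ x⁻¹ ∈ X) → χ x = 0 := by
    intro x hx
    have h1 : χ x ≤ 0 := hcon x hx
    have h2 : χ x⁻¹ ≤ 0 := by
      apply hcon
      rcases hx with h | h
      · right; simpa using h
      · left; exact h
    rw [chi_inv hχ] at h2
    linarith
  have : ∀ y ∈ l, χ y = 0 := fun y hy => hz y (hl y hy)
  rw [chi_prod hχ]
  simp only [Pi.zero_apply]
  induction l with
  | nil => simp
  | cons y l ih =>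
    simp only [List.map_cons, List.sum_cons]
    rw [this y (by simp), ih (fun z hz => hl z (by simp [hz])) (fun z hz => this z (by simp [hz]))]
    simp

end path

section sigma
variable {χ : Γ → ℝ} {σ : Γ → ℝ}

lemma sigma_prod (hσ1 : σ 1 = 1) (hσm : ∀ u v, σ (u * v) = σ u * σ v) :
    ∀ l : List Γ, σ l.prod = (l.map σ).prod
  | [] => by simpa using hσ1
  | y :: l => by simp [hσm y l.prod, sigma_prod hσ1 hσm l]

lemma sigma_inv (hσ1 : σ 1 = 1) (hσm : ∀ u v, σ (u * v) = σ u * σ v)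
    (hσ0 : ∀ u, σ u ≠ 0) (g : Γ) : σ g⁻¹ = (σ g)⁻¹ := by
  have h : σ g * σ g⁻¹ = 1 := by
    rw [← hσm, mul_inv_cancel, hσ1]
  exact eq_inv_of_mul_eq_one_right h

lemma sigma_pow (hσ1 : σ 1 = 1) (hσm : ∀ u v, σ (u * v) = σ u * σ v) (g : Γ) :
    ∀ k : ℕ, σ (g ^ k) = (σ g) ^ k
  | 0 => by simpa using hσ1
  | (k+1) => by rw [pow_succ, hσm, sigma_pow hσ1 hσm g k, pow_succ]

end sigma

lemma good_append {χ : Γ → ℝ} (b : ℝ) (l₁ l₂ : List Γ) (h1 : ∀ n, 0 ≤ b + PS χ l₁ n)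
    (h2 : ∀ n, 0 ≤ (b + TS χ l₁) + PS χ l₂ n) : ∀ n, 0 ≤ b + PS χ (l₁ ++ l₂) n := by
  intro n
  rw [PS_append]
  rcases le_or_gt n l₁.length with h | h
  · have h0 : n - l₁.length = 0 := Nat.sub_eq_zero_of_le h
    rw [h0]
    simpa using h1 n
  · have h0 : PS χ l₁ n = TS χ l₁ := PS_of_le χ l₁ h.le
    rw [h0]
    have := h2 (n - l₁.length)
    linarith

lemma AS_replicate (χ : Γ → ℝ) (k : ℕ) (y : Γ) : AS χ (List.replicate k y) = k * |χ y| := by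
  simp [AS, List.map_replicate, List.sum_replicate, nsmul_eq_mul]

lemma TS_replicate (χ : Γ → ℝ) (k : ℕ) (y : Γ) : TS χ (List.replicate k y) = k * χ y := by
  simp [TS, List.map_replicate, List.sum_replicate, nsmul_eq_mul]

lemma conj_pow_eq (x y : Γ) (n : ℕ) : (x * y * x⁻¹) ^ n = x * y ^ n * x⁻¹ := by
  induction n with
  | zero => group
  | succ n ih => rw [pow_succ, ih, pow_succ]; group

theorem core (χ : Γ → ℝ) (hχ : IsChar χ) (hne : χ ≠ 0)
    (σ : Γ → ℝ) (hσ1 : σ 1 = 1) (hσm : ∀ u v, σ (u * v) = σ u * σ v) (hσ0 : ∀ u, σ u ≠ 0)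
    (f h : Γ) (hf : 0 < χ f) (hh : 0 < χ h)
    (Hc : ∀ w : Γ, σ w = 1 → ∃ k₀ : ℕ, ∀ k, k₀ ≤ k → Commute w (f ^ k * h * (f ^ k)⁻¹)) :
    MemSigma1 χ := by
  classical
  intro X hX
  suffices T : ∀ g : Γ, 0 ≤ χ g → Relation.ReflTransGen (Rel X χ) 1 g by
    intro g₁ g₂ h1 h2
    haveI : Std.Symm (Rel X χ) := ⟨fun _ _ hr => Rel_symm X χ hr⟩
    exact ((Std.Symm.symm _ _ (T g₁ h1) : Relation.ReflTransGen (Rel X χ) _ _)).trans (T g₂ h2)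
  intro g hγ
  obtain ⟨y₀, hy₀X, he⟩ := exists_pos_letter X hχ hX hne
  obtain ⟨lf, hlf, hlfp⟩ := exists_word X hX f
  obtain ⟨lh, hlh, hlhp⟩ := exists_word X hX h
  obtain ⟨lw, hlw, hlwp⟩ := exists_word X hX g
  set e : ℝ := χ y₀ with hedef
  -- basic TS values
  have hTlf : TS χ lf = χ f := by rw [TS, ← chi_prod hχ, hlfp]
  have hTlh : TS χ lh = χ h := by rw [TS, ← chi_prod hχ, hlhp]
  have hTlw : TS χ lw = χ g := by rw [TS, ← chi_prod hχ, hlwp]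
  -- choose B
  obtain ⟨B, hB⟩ : ∃ B : ℕ, max (AS χ lf) (AS χ lh) ≤ B * e := by
    obtain ⟨B, hB⟩ := exists_nat_gt (max (AS χ lf) (AS χ lh) / e)
    refine ⟨B, ?_⟩
    rw [div_lt_iff₀ he] at hB
    linarith
  have hBf : AS χ lf ≤ B * e := le_trans (le_max_left _ _) hB
  have hBh : AS χ lh ≤ B * e := le_trans (le_max_right _ _) hB
  -- choose R
  obtain ⟨R, hR⟩ : ∃ R : ℕ, AS χ lw ≤ R * χ h := by
    obtain ⟨R, hR⟩ := exists_nat_gt (AS χ lw / χ h)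
    refine ⟨R, ?_⟩
    rw [div_lt_iff₀ hh] at hR
    linarith
  -- the sorted list
  let r : Γ → Γ → Prop := fun x y => χ y ≤ χ x
  haveI : DecidableRel r := Classical.decRel r
  haveI : IsTotal Γ r := ⟨fun a b => le_total (χ b) (χ a)⟩
  haveI : IsTrans Γ r := ⟨fun a b c h1 h2 => le_trans h2 h1⟩
  set lQ : List Γ := List.insertionSort r (ri lw ++ List.replicate B y₀) with hlQdef
  have hperm : lQ.Perm (ri lw ++ List.replicate B y₀) := List.perm_insertionSort r _
  have hsort : lQ.Pairwise r := List.pairwise_insertionSort r _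
  set Q : Γ := lQ.prod with hQdef
  have hTlQ : TS χ lQ = B * e - χ g := by
    have h1 : TS χ lQ = TS χ (ri lw ++ List.replicate B y₀) := (hperm.map χ).sum_eq
    rw [h1, TS_append, TS_ri χ hχ, hTlw, TS_replicate]
    ring
  -- sigma computations
  have hσQ : σ Q = σ (g⁻¹ * y₀ ^ B) := by
    rw [hQdef, sigma_prod hσ1 hσm, (hperm.map σ).prod_eq, List.map_append, List.prod_append,
      ← sigma_prod hσ1 hσm, ← sigma_prod hσ1 hσm, ri_prod, hlwp, List.prod_replicate,
      hσm g⁻¹ (y₀ ^ B)]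
  set u : Γ := g⁻¹ * y₀ ^ B with hudef
  set w : Γ := u⁻¹ * Q with hwdef
  have hσw : σ w = 1 := by
    rw [hwdef, hσm, hσQ, sigma_inv hσ1 hσm hσ0]
    exact inv_mul_cancel₀ (hσ0 u)
  obtain ⟨k, hk⟩ : ∃ k₀ : ℕ, ∀ k, k₀ ≤ k → Commute w (f ^ k * h * (f ^ k)⁻¹) := Hc w hσw
  have hcommθ₁ : Commute w (f ^ k * h * (f ^ k)⁻¹) := hk k le_rfl
  -- the word
  set lf' : List Γ := ri lf with hlf'def
  set lh' : List Γ := ri lh with hlh'def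
  set W : List Γ :=
    List.replicate B y₀ ++ (jr k lf ++ (jr R lh ++ (jr k lf' ++ (List.replicate B y₀⁻¹ ++
      (lw ++ (lQ ++ (jr k lf ++ (jr R lh' ++ (jr k lf' ++ ri lQ))))))))) with hWdef
  -- letters
  have hlQl : Lett X lQ := Lett_perm X hperm.symm
    (Lett_append X (Lett_ri X hlw) (Lett_replicate X hy₀X B))
  have hy₀inv : y₀⁻¹ ∈ X ∨ (y₀⁻¹)⁻¹ ∈ X := by
    rcases hy₀X with h' | h'
    · right; simpa using h'
    · left; exact h'
  have hLW : Lett X W := by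
    refine Lett_append X (Lett_replicate X hy₀X B) ?_
    refine Lett_append X (Lett_jr X hlf k) ?_
    refine Lett_append X (Lett_jr X hlh R) ?_
    refine Lett_append X (Lett_jr X (Lett_ri X hlf) k) ?_
    refine Lett_append X (Lett_replicate X hy₀inv B) ?_
    refine Lett_append X hlw ?_
    refine Lett_append X hlQl ?_
    refine Lett_append X (Lett_jr X hlf k) ?_
    refine Lett_append X (Lett_jr X (Lett_ri X hlh) R) ?_
    exact Lett_append X (Lett_jr X (Lett_ri X hlf) k) (Lett_ri X hlQl)
  -- numeric facts
  have hBe0 : 0 ≤ (B:ℝ) * e := by positivity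
  have hkf0 : 0 ≤ (k:ℝ) * χ f := by positivity
  have hRh0 : 0 ≤ (R:ℝ) * χ h := by positivity
  have hTlf' : TS χ lf' = - χ f := by rw [hlf'def, TS_ri χ hχ, hTlf]
  have hTlh' : TS χ lh' = - χ h := by rw [hlh'def, TS_ri χ hχ, hTlh]
  have hAlf' : AS χ lf' = AS χ lf := AS_ri χ hχ lf
  have hAlh' : AS χ lh' = AS χ lh := AS_ri χ hχ lh
  -- goodness
  have hgood : ∀ n, 0 ≤ (0:ℝ) + PS χ W n := by
    rw [hWdef]
    refine good_append _ _ _ ?_ ?_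
    · intro n
      have := PS_nonneg_of_letters χ (List.replicate B y₀)
        (fun z hz => by rw [List.eq_of_mem_replicate hz]; exact he.le) n
      linarith
    rw [TS_replicate]
    refine good_append _ _ _ ?_ ?_
    · intro n
      have h1 := PS_jr_ge χ k lf n
      have h2 : min 0 (TS χ lf) = 0 := by rw [hTlf]; exact min_eq_left hf.le
      rw [h2] at h1
      linarith
    rw [TS_jr, hTlf]
    refine good_append _ _ _ ?_ ?_
    · intro n
      have h1 := PS_jr_ge χ R lh n
      have h2 : min 0 (TS χ lh) = 0 := by rw [hTlh]; exact min_eq_left hh.le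
      rw [h2] at h1
      linarith
    rw [TS_jr, hTlh]
    refine good_append _ _ _ ?_ ?_
    · intro n
      have h1 := PS_jr_ge χ k lf' n
      have h2 : min 0 (TS χ lf') = - χ f := by rw [hTlf']; exact min_eq_right (by linarith)
      rw [h2, hAlf'] at h1
      linarith
    rw [TS_jr, hTlf']
    refine good_append _ _ _ ?_ ?_
    · intro n
      have h1 := neg_AS_le_PS χ (List.replicate B y₀⁻¹) n
      rw [AS_replicate, chi_inv hχ, abs_neg, abs_of_pos he] at h1
      linarith
    rw [TS_replicate, chi_inv hχ]
    refine good_append _ _ _ ?_ ?_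
    · intro n
      have h1 := neg_AS_le_PS χ lw n
      linarith
    rw [hTlw]
    refine good_append _ _ _ ?_ ?_
    · intro n
      have h1 := PS_sorted_ge χ lQ hsort n
      have h2 : -χ g ≤ min 0 (TS χ lQ) := by
        rw [hTlQ]
        rcases le_or_gt 0 ((B:ℝ) * e - χ g) with h' | h'
        · rw [min_eq_left h']; linarith
        · rw [min_eq_right h'.le]; linarith
      linarith
    rw [hTlQ]
    refine good_append _ _ _ ?_ ?_
    · intro n
      have h1 := PS_jr_ge χ k lf n
      have h2 : min 0 (TS χ lf) = 0 := by rw [hTlf]; exact min_eq_left hf.le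
      rw [h2] at h1
      linarith
    rw [TS_jr, hTlf]
    refine good_append _ _ _ ?_ ?_
    · intro n
      have h1 := PS_jr_ge χ R lh' n
      have h2 : min 0 (TS χ lh') = - χ h := by rw [hTlh']; exact min_eq_right (by linarith)
      rw [h2, hAlh'] at h1
      linarith
    rw [TS_jr, hTlh']
    refine good_append _ _ _ ?_ ?_
    · intro n
      have h1 := PS_jr_ge χ k lf' n
      have h2 : min 0 (TS χ lf') = - χ f := by rw [hTlf']; exact min_eq_right (by linarith)
      rw [h2, hAlf'] at h1
      linarith
    rw [TS_jr, hTlf']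
    · intro n
      have h1 := PS_sorted_ge χ (ri lQ) (ri_sorted χ hχ lQ hsort) n
      have h2 : -((B:ℝ) * e) ≤ min 0 (TS χ (ri lQ)) := by
        rw [TS_ri χ hχ, hTlQ]
        rcases le_or_gt 0 (-((B:ℝ) * e - χ g)) with h' | h'
        · rw [min_eq_left h']; linarith
        · rw [min_eq_right h'.le]; linarith
      linarith
  -- the product
  have hθR : (f ^ k * h * (f ^ k)⁻¹)⁻¹ ^ R = f ^ k * (h⁻¹) ^ R * (f ^ k)⁻¹ := by
    rw [show (f ^ k * h * (f ^ k)⁻¹)⁻¹ = f ^ k * h⁻¹ * (f ^ k)⁻¹ by group]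
    exact conj_pow_eq _ _ _
  have hcommθ : Commute w (f ^ k * (h⁻¹) ^ R * (f ^ k)⁻¹) := by
    rw [← hθR]
    exact (hcommθ₁.inv_right).pow_right R
  have hconj : Q * (f ^ k * (h⁻¹) ^ R * (f ^ k)⁻¹) * Q⁻¹
      = u * (f ^ k * (h⁻¹) ^ R * (f ^ k)⁻¹) * u⁻¹ := by
    have hQu : Q = u * w := by rw [hwdef]; group
    set θ : Γ := f ^ k * (h⁻¹) ^ R * (f ^ k)⁻¹
    have hwθ : w * θ * w⁻¹ = θ := by
      rw [hcommθ.eq]; group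
    calc Q * θ * Q⁻¹ = u * (w * θ * w⁻¹) * u⁻¹ := by rw [hQu]; group
      _ = u * θ * u⁻¹ := by rw [hwθ]
  have hWprod : W.prod = g := by
    have h1 : W.prod = y₀ ^ B * (f ^ k * (h ^ R * ((f⁻¹) ^ k * ((y₀⁻¹) ^ B *
        (g * (Q * (f ^ k * ((h⁻¹) ^ R * ((f⁻¹) ^ k * Q⁻¹))))))))) := by
      rw [hWdef]
      simp only [List.prod_append, jr_prod, List.prod_replicate, hlf'def, hlh'def,
        ri_prod, hlfp, hlhp, hlwp, ← hQdef]
    rw [h1]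
    have h2 : Q * (f ^ k * ((h⁻¹) ^ R * ((f⁻¹) ^ k * Q⁻¹))) =
        u * (f ^ k * (h⁻¹) ^ R * (f ^ k)⁻¹) * u⁻¹ := by
      rw [← hconj]; group
    rw [h2, hudef]
    group
  -- conclude
  have := path_of_good X hχ 1 W hLW (by
    intro n
    rw [chi_one hχ]
    exact hgood n)
  rwa [one_mul, hWprod] at this



/-- two affine maps agreeing near a point are equal as data -/
lemma affine_eq {m₁ b₁ m₂ b₂ t ε : ℝ} (hε : 0 < ε)
    (h : ∀ u : ℝ, |u - t| < ε → m₁ * u + b₁ = m₂ * u + b₂) : m₁ = m₂ ∧ b₁ = b₂ := by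
  have h1 := h t (by simp [hε])
  have h2 := h (t + ε / 2) (by rw [abs_of_nonneg] <;> linarith)
  have hm : m₁ = m₂ := by nlinarith
  refine ⟨hm, ?_⟩
  rw [hm] at h1
  linarith

/-- locally affine on an open interval implies affine -/
lemma loc_affine_interval {g : ℝ → ℝ} {p q : ℝ} (hpq : p < q)
    (hloc : ∀ t ∈ Ioo p q, ∃ m b ε : ℝ, 0 < ε ∧ ∀ u : ℝ, |u - t| < ε → g u = m * u + b) :
    ∃ m b : ℝ, ∀ t ∈ Ioo p q, g t = m * t + b := by
  classical
  set t₀ : ℝ := (p + q) / 2 with ht₀def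
  have ht₀ : t₀ ∈ Ioo p q := by constructor <;> simp [ht₀def] <;> linarith
  obtain ⟨m₀, b₀, ε₀, hε₀, hrep₀⟩ := hloc t₀ ht₀
  set U : Set ℝ := {t | ∃ ε : ℝ, 0 < ε ∧ ∀ u : ℝ, |u - t| < ε → g u = m₀ * u + b₀} with hUdef
  set V : Set ℝ := {t | ∃ m b ε : ℝ, 0 < ε ∧ (∀ u : ℝ, |u - t| < ε → g u = m * u + b) ∧
      ¬(m = m₀ ∧ b = b₀)} with hVdef
  have hUopen : IsOpen U := by
    rw [isOpen_iff_mem_nhds]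
    rintro t ⟨ε, hε, hrep⟩
    rw [Metric.mem_nhds_iff]
    refine ⟨ε / 2, by linarith, fun t' ht' => ⟨ε / 2, by linarith, fun u hu => hrep u ?_⟩⟩
    rw [Metric.mem_ball, Real.dist_eq] at ht'
    have : |u - t| ≤ |u - t'| + |t' - t| := abs_sub_le u t' t
    linarith
  have hVopen : IsOpen V := by
    rw [isOpen_iff_mem_nhds]
    rintro t ⟨m, b, ε, hε, hrep, hne⟩
    rw [Metric.mem_nhds_iff]
    refine ⟨ε / 2, by linarith, fun t' ht' => ⟨m, b, ε / 2, by linarith, fun u hu => hrep u ?_, hne⟩⟩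
    rw [Metric.mem_ball, Real.dist_eq] at ht'
    have : |u - t| ≤ |u - t'| + |t' - t| := abs_sub_le u t' t
    linarith
  have hcover : Ioo p q ⊆ U ∪ V := by
    intro t ht
    obtain ⟨m, b, ε, hε, hrep⟩ := hloc t ht
    by_cases hmb : m = m₀ ∧ b = b₀
    · left; exact ⟨ε, hε, by rw [hmb.1, hmb.2] at hrep; exact hrep⟩
    · right; exact ⟨m, b, ε, hε, hrep, hmb⟩
  have hdisj : ¬ (Ioo p q ∩ (U ∩ V)).Nonempty := by
    rintro ⟨t, _, ⟨ε₁, hε₁, hrep₁⟩, ⟨m, b, ε₂, hε₂, hrep₂, hne⟩⟩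
    apply hne
    have := affine_eq (lt_min hε₁ hε₂) (t := t) (m₁ := m) (b₁ := b) (m₂ := m₀) (b₂ := b₀)
      (fun u hu => by
        rw [← hrep₂ u (lt_of_lt_of_le hu (min_le_right _ _)),
          ← hrep₁ u (lt_of_lt_of_le hu (min_le_left _ _))])
    exact this
  have hU : Ioo p q ⊆ U := by
    by_contra hcon
    have hVne : (Ioo p q ∩ V).Nonempty := by
      rw [not_subset] at hcon
      obtain ⟨t, ht, htU⟩ := hcon
      rcases hcover ht with h | h
      · exact absurd h htU
      · exact ⟨t, ht, h⟩
    have hUne : (Ioo p q ∩ U).Nonempty := ⟨t₀, ht₀, ⟨ε₀, hε₀, hrep₀⟩⟩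
    exact hdisj ((isPreconnected_Ioo (a := p) (b := q)) U V hUopen hVopen hcover hUne hVne)
  refine ⟨m₀, b₀, fun t ht => ?_⟩
  obtain ⟨ε, hε, hrep⟩ := hU ht
  exact hrep t (by simp [hε])

section germ

variable {a c : ℝ} {G : Subgroup (Equiv.Perm ℝ)}

lemma mono_of (hG : (G : Set (Equiv.Perm ℝ)) ⊆ PLo (Icc a c)) (u : G) :
    StrictMono ⇑(u : Equiv.Perm ℝ) := (hG u.2).1

lemma fix_out (hG : (G : Set (Equiv.Perm ℝ)) ⊆ PLo (Icc a c)) (u : G) {t : ℝ}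
    (ht : t ∉ Icc a c) : (u : Equiv.Perm ℝ) t = t := by
  by_contra hne
  exact ht ((hG u.2).2.2 hne)

lemma fix_lt (hG : (G : Set (Equiv.Perm ℝ)) ⊆ PLo (Icc a c)) (u : G) {t : ℝ}
    (ht : t < a) : (u : Equiv.Perm ℝ) t = t :=
  fix_out hG u (by simp [mem_Icc]; intro h; linarith)

lemma fix_gt (hG : (G : Set (Equiv.Perm ℝ)) ⊆ PLo (Icc a c)) (u : G) {t : ℝ}
    (ht : c < t) : (u : Equiv.Perm ℝ) t = t :=
  fix_out hG u (by simp [mem_Icc]; intro h; linarith)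

lemma fix_a (hG : (G : Set (Equiv.Perm ℝ)) ⊆ PLo (Icc a c)) (u : G) :
    (u : Equiv.Perm ℝ) a = a := by
  have key : ∀ v : G, a ≤ (v : Equiv.Perm ℝ) a := by
    intro v
    by_contra hlt
    push_neg at hlt
    have h1 : (v : Equiv.Perm ℝ) ((v : Equiv.Perm ℝ) a) = (v : Equiv.Perm ℝ) a :=
      fix_lt hG v hlt
    have h2 : (v : Equiv.Perm ℝ) ((v : Equiv.Perm ℝ) a) < (v : Equiv.Perm ℝ) a :=
      mono_of hG v hlt
    rw [h1] at h2
    exact lt_irrefl _ h2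
  refine le_antisymm ?_ (key u)
  have h3 : a ≤ (↑(u⁻¹) : Equiv.Perm ℝ) a := key u⁻¹
  have h4 : (↑(u⁻¹) : Equiv.Perm ℝ) = (↑u : Equiv.Perm ℝ)⁻¹ := rfl
  rw [h4] at h3
  have h5 := (mono_of hG u).monotone h3
  rwa [Equiv.Perm.coe_inv, Equiv.apply_symm_apply] at h5

lemma fix_c (hG : (G : Set (Equiv.Perm ℝ)) ⊆ PLo (Icc a c)) (u : G) :
    (u : Equiv.Perm ℝ) c = c := by
  have key : ∀ v : G, (v : Equiv.Perm ℝ) c ≤ c := by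
    intro v
    by_contra hlt
    push_neg at hlt
    have h1 : (v : Equiv.Perm ℝ) ((v : Equiv.Perm ℝ) c) = (v : Equiv.Perm ℝ) c :=
      fix_gt hG v hlt
    have h2 : (v : Equiv.Perm ℝ) c < (v : Equiv.Perm ℝ) ((v : Equiv.Perm ℝ) c) :=
      mono_of hG v hlt
    rw [h1] at h2
    exact lt_irrefl _ h2
  refine le_antisymm (key u) ?_
  have h3 : (↑(u⁻¹) : Equiv.Perm ℝ) c ≤ c := key u⁻¹
  have h4 : (↑(u⁻¹) : Equiv.Perm ℝ) = (↑u : Equiv.Perm ℝ)⁻¹ := rfl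
  rw [h4] at h3
  have h5 := (mono_of hG u).monotone h3
  rwa [Equiv.Perm.coe_inv, Equiv.apply_symm_apply] at h5

/-- escape a finite breakpoint set to the right of `a` -/
lemma exists_clear_interval (B : Finset ℝ) (a : ℝ) :
    ∃ ε : ℝ, 0 < ε ∧ ∀ t : ℝ, a < t → t < a + ε → t ∉ B := by
  classical
  set T := B.filter (fun b => a < b) with hTdef
  rcases T.eq_empty_or_nonempty with hT | hT
  · refine ⟨1, one_pos, fun t ht1 ht2 htB => ?_⟩
    have : t ∈ T := by rw [hTdef]; simp [htB, ht1]
    rw [hT] at this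
    simp at this
  · refine ⟨T.min' hT - a, ?_, fun t ht1 ht2 htB => ?_⟩
    · have := (Finset.mem_filter.mp (T.min'_mem hT)).2
      linarith
    · have htT : t ∈ T := by rw [hTdef]; simp [htB, ht1]
      have := T.min'_le t htT
      linarith

/-- germ linearity at `a` (from the right) -/
lemma exists_germR (hac : a < c) (hG : (G : Set (Equiv.Perm ℝ)) ⊆ PLo (Icc a c)) (u : G) :
    ∃ s ε : ℝ, 0 < s ∧ 0 < ε ∧ ∀ t : ℝ, a ≤ t → t ≤ a + ε → (u : Equiv.Perm ℝ) t = a + s * (t - a) := by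
  obtain ⟨Bf, hBf⟩ := (hG u.2).2.1
  obtain ⟨ε₀, hε₀, hclear⟩ := exists_clear_interval Bf a
  obtain ⟨m, b, haff⟩ := loc_affine_interval (g := ⇑(u : Equiv.Perm ℝ)) (p := a) (q := a + ε₀)
    (by linarith) (fun t ht => hBf t (hclear t ht.1 ht.2))
  have hmono := mono_of hG u
  have hfa := fix_a hG u
  -- m is positive
  have hm : 0 < m := by
    have h1 : (a + ε₀/3) < (a + 2*ε₀/3) := by linarith
    have h2 := hmono h1
    rw [haff _ ⟨by linarith, by linarith⟩, haff _ ⟨by linarith, by linarith⟩] at h2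
    nlinarith
  -- anchoring : m * a + b = a
  have hanch : m * a + b = a := by
    rcases lt_trichotomy (m * a + b) a with hlt | heq | hgt
    · exfalso
      set d := (a - (m * a + b)) / (2 * m) with hddef
      have hd : 0 < d := by rw [hddef]; apply div_pos (by linarith) (by linarith)
      set t := a + min (ε₀/2) d with htdef
      have ht1 : a < t := by rw [htdef]; simp [lt_min_iff]; constructor <;> linarith
      have ht2 : t < a + ε₀ := by
        rw [htdef]
        have := min_le_left (ε₀/2) d
        linarith
      have hrep := haff t ⟨ht1, ht2⟩
      have hgtt : a < (u : Equiv.Perm ℝ) t := by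
        have := hmono ht1
        rwa [hfa] at this
      rw [hrep] at hgtt
      have htd : t - a ≤ d := by rw [htdef]; simp [min_le_right]
      have : m * t + b = m * a + b + m * (t - a) := by ring
      have hb : m * (t - a) ≤ m * d := by
        apply mul_le_mul_of_nonneg_left htd hm.le
      have hmd : m * d = (a - (m * a + b)) / 2 := by
        rw [hddef]; field_simp
      nlinarith
    · exact heq
    · exfalso
      set z := (a + (m * a + b)) / 2 with hzdef
      have hz1 : a < z := by rw [hzdef]; linarith
      have hz2 : z < m * a + b := by rw [hzdef]; linarith
      set y := (↑u : Equiv.Perm ℝ)⁻¹ z with hydef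
      have hy : (u : Equiv.Perm ℝ) y = z := by rw [hydef, Equiv.Perm.coe_inv, Equiv.apply_symm_apply]
      rcases le_or_gt y a with hya | hya
      · have := hmono.monotone hya
        rw [hy, hfa] at this
        linarith
      · set t := min (a + ε₀/2) y with htdef
        have ht1 : a < t := by rw [htdef]; simp [lt_min_iff]; constructor <;> linarith
        have ht2 : t < a + ε₀ := by
          rw [htdef]
          have := min_le_left (a + ε₀/2) y
          linarith
        have hty : t ≤ y := by rw [htdef]; exact min_le_right _ _
        have h6 := hmono.monotone hty
        rw [hy] at h6
        have hrep := haff t ⟨ht1, ht2⟩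
        rw [hrep] at h6
        nlinarith
  refine ⟨m, ε₀/2, hm, by linarith, fun t hta htb => ?_⟩
  rcases eq_or_lt_of_le hta with rfl | hta'
  · rw [hfa]; ring
  · rw [haff t ⟨hta', by linarith⟩]
    linarith [hanch]

/-- germ linearity at `c` (from the left) -/
lemma exists_germL (hac : a < c) (hG : (G : Set (Equiv.Perm ℝ)) ⊆ PLo (Icc a c)) (u : G) :
    ∃ s ε : ℝ, 0 < s ∧ 0 < ε ∧ ∀ t : ℝ, c - ε ≤ t → t ≤ c → (u : Equiv.Perm ℝ) t = c + s * (t - c) := by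
  obtain ⟨Bf, hBf⟩ := (hG u.2).2.1
  obtain ⟨ε₀, hε₀, hclear⟩ := exists_clear_interval (Bf.image (fun x => -x)) (-c)
  have hclear' : ∀ t : ℝ, c - ε₀ < t → t < c → t ∉ Bf := by
    intro t h1 h2 htB
    exact hclear (-t) (by linarith) (by linarith) (Finset.mem_image_of_mem _ htB)
  obtain ⟨m, b, haff⟩ := loc_affine_interval (g := ⇑(u : Equiv.Perm ℝ)) (p := c - ε₀) (q := c)
    (by linarith) (fun t ht => hBf t (hclear' t ht.1 ht.2))
  have hmono := mono_of hG u
  have hfc := fix_c hG u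
  have hm : 0 < m := by
    have h1 : (c - 2*ε₀/3) < (c - ε₀/3) := by linarith
    have h2 := hmono h1
    rw [haff _ ⟨by linarith, by linarith⟩, haff _ ⟨by linarith, by linarith⟩] at h2
    nlinarith
  have hanch : m * c + b = c := by
    rcases lt_trichotomy (m * c + b) c with hlt | heq | hgt
    · exfalso
      set z := (c + (m * c + b)) / 2 with hzdef
      have hz1 : z < c := by rw [hzdef]; linarith
      have hz2 : m * c + b < z := by rw [hzdef]; linarith
      set y := (↑u : Equiv.Perm ℝ)⁻¹ z with hydef
      have hy : (u : Equiv.Perm ℝ) y = z := by rw [hydef, Equiv.Perm.coe_inv, Equiv.apply_symm_apply]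
      rcases le_or_gt c y with hyc | hyc
      · have := hmono.monotone hyc
        rw [hy, hfc] at this
        linarith
      · set t := max (c - ε₀/2) y with htdef
        have ht1 : t < c := by rw [htdef]; simp [max_lt_iff]; constructor <;> linarith
        have ht2 : c - ε₀ < t := by
          rw [htdef]
          have := le_max_left (c - ε₀/2) y
          linarith
        have hty : y ≤ t := by rw [htdef]; exact le_max_right _ _
        have h6 := hmono.monotone hty
        rw [hy] at h6
        have hrep := haff t ⟨ht2, ht1⟩
        rw [hrep] at h6
        nlinarith
    · exact heq
    · exfalso
      set d := ((m * c + b) - c) / (2 * m) with hddef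
      have hd : 0 < d := by rw [hddef]; apply div_pos (by linarith) (by linarith)
      set t := c - min (ε₀/2) d with htdef
      have ht1 : t < c := by rw [htdef]; simp [lt_min_iff]; constructor <;> linarith
      have ht2 : c - ε₀ < t := by
        rw [htdef]
        have := min_le_left (ε₀/2) d
        linarith
      have hrep := haff t ⟨ht2, ht1⟩
      have hltt : (u : Equiv.Perm ℝ) t < c := by
        have := hmono ht1
        rwa [hfc] at this
      rw [hrep] at hltt
      have htd : c - t ≤ d := by rw [htdef]; simp [min_le_right]
      have hb : m * (c - t) ≤ m * d := mul_le_mul_of_nonneg_left htd hm.le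
      have hmd : m * d = ((m * c + b) - c) / 2 := by
        rw [hddef]; field_simp
      nlinarith
  refine ⟨m, ε₀/2, hm, by linarith, fun t hta htb => ?_⟩
  rcases eq_or_lt_of_le htb with rfl | htb'
  · rw [hfc]; ring
  · rw [haff t ⟨by linarith, htb'⟩]
    linarith [hanch]

/-- Construction of the slope homomorphism and commuting property, germ at `a`. -/
lemma case_R (hac : a < c) (hG : (G : Set (Equiv.Perm ℝ)) ⊆ PLo (Icc a c))
    (f h : G) (δ : ℝ) (hδ : 0 < δ) (m : ℝ) (hm1 : m < 1)
    (hfrep : ∀ t : ℝ, a ≤ t → t ≤ a + δ → (f : Equiv.Perm ℝ) t = a + m * (t - a))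
    (hsupp : suppOf ⇑(h : Equiv.Perm ℝ) ⊆ Icc a (a + δ)) :
    ∃ σ : G → ℝ, σ 1 = 1 ∧ (∀ u v, σ (u * v) = σ u * σ v) ∧ (∀ u, σ u ≠ 0) ∧
      (∀ w : G, σ w = 1 → ∃ k₀ : ℕ, ∀ k, k₀ ≤ k → Commute w (f ^ k * h * (f ^ k)⁻¹)) := by
  classical
  choose s ε hs hε hrep using fun u : G => exists_germR hac hG u
  have huniq : ∀ (u : G) (s1 ε1 : ℝ), 0 < ε1 →
      (∀ t : ℝ, a ≤ t → t ≤ a + ε1 → (u : Equiv.Perm ℝ) t = a + s1 * (t - a)) → s1 = s u := by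
    intro u s1 ε1 hε1 h1
    set d : ℝ := min ε1 (ε u) with hddef
    have hd : 0 < d := lt_min hε1 (hε u)
    have e1 := h1 (a + d) (by linarith) (by rw [hddef]; linarith [min_le_left ε1 (ε u)])
    have e2 := hrep u (a + d) (by linarith) (by rw [hddef]; linarith [min_le_right ε1 (ε u)])
    rw [e1] at e2
    have : s1 * d = s u * d := by linarith [e2]
    exact mul_right_cancel₀ (ne_of_gt hd) this
  have hσ1 : s 1 = 1 := by
    refine (huniq 1 1 1 one_pos fun t ht1 ht2 => ?_).symm
    have : ((1 : G) : Equiv.Perm ℝ) t = t := rfl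
    rw [this]; ring
  have hσm : ∀ u v : G, s (u * v) = s u * s v := by
    intro u v
    refine (huniq (u * v) (s u * s v) (min (ε v) (ε u / s v))
      (lt_min (hε v) (div_pos (hε u) (hs v))) fun t ht1 ht2 => ?_).symm
    have hco : ((u * v : G) : Equiv.Perm ℝ) t = (u : Equiv.Perm ℝ) ((v : Equiv.Perm ℝ) t) := rfl
    have h2 : t ≤ a + ε v := le_trans ht2 (by linarith [min_le_left (ε v) (ε u / s v)])
    have hv := hrep v t ht1 h2
    rw [hco, hv]
    have h3 : 0 ≤ s v * (t - a) := mul_nonneg (hs v).le (by linarith)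
    have h4 : s v * (t - a) ≤ ε u := by
      have h5 : t - a ≤ ε u / s v := by linarith [min_le_right (ε v) (ε u / s v)]
      calc s v * (t - a) ≤ s v * (ε u / s v) := mul_le_mul_of_nonneg_left h5 (hs v).le
        _ = ε u := by rw [mul_comm, div_mul_cancel₀ (ε u) (ne_of_gt (hs v))]
    rw [hrep u (a + s v * (t - a)) (by linarith) (by linarith)]
    ring
  refine ⟨s, hσ1, hσm, fun u => (hs u).ne', ?_⟩
  intro w hσw
  -- slope of f is positive
  have hm0 : 0 < m := by
    have h1 := mono_of hG f (show a < a + δ by linarith)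
    rw [fix_a hG f, hfrep (a + δ) (by linarith) le_rfl] at h1
    nlinarith
  -- power formula
  have hfk : ∀ (k : ℕ) (t : ℝ), a ≤ t → t ≤ a + δ →
      ((f ^ k : G) : Equiv.Perm ℝ) t = a + m ^ k * (t - a) := by
    intro k
    induction k with
    | zero =>
      intro t ht1 ht2
      have : ((f ^ 0 : G) : Equiv.Perm ℝ) t = t := by rw [pow_zero]; rfl
      rw [this]; ring
    | succ k ih =>
      intro t ht1 ht2
      have hco : ((f ^ (k+1) : G) : Equiv.Perm ℝ) t
          = (f : Equiv.Perm ℝ) (((f ^ k : G) : Equiv.Perm ℝ) t) := by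
        rw [pow_succ']; rfl
      rw [hco, ih t ht1 ht2]
      have hk1 : m ^ k ≤ 1 := pow_le_one₀ hm0.le hm1.le
      have h3 : 0 ≤ m ^ k * (t - a) := mul_nonneg (by positivity) (by linarith)
      have h4 : m ^ k * (t - a) ≤ δ := by nlinarith
      rw [hfrep (a + m ^ k * (t - a)) (by linarith) (by linarith)]
      ring
  -- choice of k₀
  obtain ⟨k₀, hk₀⟩ : ∃ k₀ : ℕ, m ^ k₀ * δ < ε w := by
    obtain ⟨n, hn⟩ := exists_pow_lt_of_lt_one (div_pos (hε w) hδ) hm1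
    refine ⟨n, ?_⟩
    rw [lt_div_iff₀ hδ] at hn
    exact hn
  refine ⟨k₀, fun k hk => ?_⟩
  set μ : ℝ := m ^ k with hμdef
  have hμ0 : 0 < μ := by rw [hμdef]; exact pow_pos hm0 k
  have hμ1 : μ ≤ 1 := by rw [hμdef]; exact pow_le_one₀ hm0.le hm1.le
  have hμδ : μ * δ < ε w := by
    have h1 : m ^ k ≤ m ^ k₀ := pow_le_pow_of_le_one hm0.le hm1.le hk
    have h2 : m ^ k * δ ≤ m ^ k₀ * δ := by nlinarith
    rw [← hμdef] at h2
    linarith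
  -- w fixes (-∞, a + μδ]
  have hwfix : ∀ t : ℝ, t ≤ a + μ * δ → (w : Equiv.Perm ℝ) t = t := by
    intro t ht
    rcases lt_or_ge t a with h' | h'
    · exact fix_lt hG w h'
    · have := hrep w t h' (by nlinarith)
      rw [this, hσw]; ring
  -- h maps [a, a+δ] to itself
  have hmapS : ∀ t : ℝ, a ≤ t → t ≤ a + δ →
      a ≤ (h : Equiv.Perm ℝ) t ∧ (h : Equiv.Perm ℝ) t ≤ a + δ := by
    intro t h1 h2
    by_contra hcon
    have h3 : (h : Equiv.Perm ℝ) t ∉ Icc a (a + δ) := by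
      rw [mem_Icc]; exact hcon
    have h4 : (h : Equiv.Perm ℝ) t ∉ suppOf ⇑(h : Equiv.Perm ℝ) := fun hs => h3 (hsupp hs)
    have h5 : (h : Equiv.Perm ℝ) ((h : Equiv.Perm ℝ) t) = (h : Equiv.Perm ℝ) t := by
      by_contra h6; exact h4 h6
    have h7 : (h : Equiv.Perm ℝ) t = t := (h : Equiv.Perm ℝ).injective h5
    rw [h7] at h3
    exact h3 (mem_Icc.mpr ⟨h1, h2⟩)
  -- inverse formula on J
  have hinvJ : ∀ t : ℝ, a ≤ t → t ≤ a + μ * δ →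
      ((f ^ k : G) : Equiv.Perm ℝ)⁻¹ t = a + (t - a) / μ := by
    intro t h1 h2
    have hx1 : a ≤ a + (t - a) / μ := by
      have : 0 ≤ (t - a) / μ := div_nonneg (by linarith) hμ0.le
      linarith
    have hx2 : a + (t - a) / μ ≤ a + δ := by
      have : (t - a) / μ ≤ δ := by
        rw [div_le_iff₀ hμ0]; nlinarith
      linarith
    have h3 : ((f ^ k : G) : Equiv.Perm ℝ) (a + (t - a) / μ) = t := by
      rw [hfk k _ hx1 hx2, ← hμdef]
      have h5 : a + (t - a) / μ - a = (t - a) / μ := by ring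
      rw [h5, mul_comm, div_mul_cancel₀ (t - a) (ne_of_gt hμ0)]
      ring
    rw [Equiv.Perm.inv_def, Equiv.symm_apply_eq]
    exact h3.symm
  -- the conjugate
  have hθco : ∀ t : ℝ, ((f ^ k * h * (f ^ k)⁻¹ : G) : Equiv.Perm ℝ) t
      = ((f ^ k : G) : Equiv.Perm ℝ) ((h : Equiv.Perm ℝ) (((f ^ k : G) : Equiv.Perm ℝ)⁻¹ t)) :=
    fun t => rfl
  -- support of the conjugate
  have hsupθ : ∀ t : ℝ, ¬ (a ≤ t ∧ t ≤ a + μ * δ) →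
      ((f ^ k * h * (f ^ k)⁻¹ : G) : Equiv.Perm ℝ) t = t := by
    intro t ht
    set ξ : ℝ := ((f ^ k : G) : Equiv.Perm ℝ)⁻¹ t with hξdef
    have hξS : ¬ (a ≤ ξ ∧ ξ ≤ a + δ) := by
      rintro ⟨h1, h2⟩
      apply ht
      have h3 : ((f ^ k : G) : Equiv.Perm ℝ) ξ = t := by
        rw [hξdef]; exact Equiv.apply_symm_apply _ _
      rw [hfk k ξ h1 h2, ← hμdef] at h3
      constructor <;> nlinarith
    have hξsupp : ξ ∉ suppOf ⇑(h : Equiv.Perm ℝ) := by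
      intro hs
      have := hsupp hs
      rw [mem_Icc] at this
      exact hξS this
    have hhξ : (h : Equiv.Perm ℝ) ξ = ξ := by
      by_contra h6; exact hξsupp h6
    rw [hθco, ← hξdef, hhξ, hξdef, Equiv.Perm.coe_inv, Equiv.apply_symm_apply]
  -- the conjugate preserves J
  have hθJ : ∀ t : ℝ, a ≤ t → t ≤ a + μ * δ →
      a ≤ ((f ^ k * h * (f ^ k)⁻¹ : G) : Equiv.Perm ℝ) t ∧
      ((f ^ k * h * (f ^ k)⁻¹ : G) : Equiv.Perm ℝ) t ≤ a + μ * δ := by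
    intro t h1 h2
    rw [hθco, hinvJ t h1 h2]
    have hx1 : a ≤ a + (t - a) / μ := by
      have : 0 ≤ (t - a) / μ := div_nonneg (by linarith) hμ0.le
      linarith
    have hx2 : a + (t - a) / μ ≤ a + δ := by
      have : (t - a) / μ ≤ δ := by rw [div_le_iff₀ hμ0]; nlinarith
      linarith
    obtain ⟨hh1, hh2⟩ := hmapS _ hx1 hx2
    rw [hfk k _ hh1 hh2, ← hμdef]
    constructor <;> nlinarith
  -- w maps the complement of J into itself
  have hwJc : ∀ t : ℝ, ¬ (a ≤ t ∧ t ≤ a + μ * δ) →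
      ¬ (a ≤ (w : Equiv.Perm ℝ) t ∧ (w : Equiv.Perm ℝ) t ≤ a + μ * δ) := by
    intro t ht
    rcases lt_or_ge t a with h' | h'
    · rw [fix_lt hG w h']
      exact ht
    · have h2 : a + μ * δ < t := by
        by_contra h3
        push_neg at h3
        exact ht ⟨h', h3⟩
      have h4 : (w : Equiv.Perm ℝ) (a + μ * δ) < (w : Equiv.Perm ℝ) t := mono_of hG w h2
      rw [hwfix (a + μ * δ) le_rfl] at h4
      rintro ⟨_, h5⟩
      linarith
  -- commutation
  apply Subtype.ext
  apply Equiv.ext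
  intro t
  have hco1 : ((w * (f ^ k * h * (f ^ k)⁻¹) : G) : Equiv.Perm ℝ) t
      = (w : Equiv.Perm ℝ) (((f ^ k * h * (f ^ k)⁻¹ : G) : Equiv.Perm ℝ) t) := rfl
  have hco2 : (((f ^ k * h * (f ^ k)⁻¹ : G) * w : G) : Equiv.Perm ℝ) t
      = ((f ^ k * h * (f ^ k)⁻¹ : G) : Equiv.Perm ℝ) ((w : Equiv.Perm ℝ) t) := rfl
  show ((w * (f ^ k * h * (f ^ k)⁻¹) : G) : Equiv.Perm ℝ) t
      = (((f ^ k * h * (f ^ k)⁻¹ : G) * w : G) : Equiv.Perm ℝ) t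
  rw [hco1, hco2]
  by_cases htJ : a ≤ t ∧ t ≤ a + μ * δ
  · obtain ⟨hθ1, hθ2⟩ := hθJ t htJ.1 htJ.2
    rw [hwfix _ hθ2, hwfix t htJ.2]
  · rw [hsupθ t htJ, hsupθ _ (hwJc t htJ)]

/-- Construction of the slope homomorphism and commuting property, germ at `c`. -/
lemma case_L (hac : a < c) (hG : (G : Set (Equiv.Perm ℝ)) ⊆ PLo (Icc a c))
    (f h : G) (δ : ℝ) (hδ : 0 < δ) (m b : ℝ) (hm1 : m < 1)
    (hfrep0 : ∀ t : ℝ, c - δ ≤ t → t ≤ c → (f : Equiv.Perm ℝ) t = m * t + b)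
    (hsupp : suppOf ⇑(h : Equiv.Perm ℝ) ⊆ Icc (c - δ) c) :
    ∃ σ : G → ℝ, σ 1 = 1 ∧ (∀ u v, σ (u * v) = σ u * σ v) ∧ (∀ u, σ u ≠ 0) ∧
      (∀ w : G, σ w = 1 → ∃ k₀ : ℕ, ∀ k, k₀ ≤ k → Commute w (f ^ k * h * (f ^ k)⁻¹)) := by
  classical
  have hcc : m * c + b = c := by
    have := hfrep0 c (by linarith) le_rfl
    rw [fix_c hG f] at this
    linarith
  have hfrep : ∀ t : ℝ, c - δ ≤ t → t ≤ c → (f : Equiv.Perm ℝ) t = c + m * (t - c) := by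
    intro t h1 h2
    rw [hfrep0 t h1 h2]
    linarith [hcc]
  choose s ε hs hε hrep using fun u : G => exists_germL hac hG u
  have huniq : ∀ (u : G) (s1 ε1 : ℝ), 0 < ε1 →
      (∀ t : ℝ, c - ε1 ≤ t → t ≤ c → (u : Equiv.Perm ℝ) t = c + s1 * (t - c)) → s1 = s u := by
    intro u s1 ε1 hε1 h1
    set d : ℝ := min ε1 (ε u) with hddef
    have hd : 0 < d := lt_min hε1 (hε u)
    have e1 := h1 (c - d) (by rw [hddef]; linarith [min_le_left ε1 (ε u)]) (by linarith)
    have e2 := hrep u (c - d) (by rw [hddef]; linarith [min_le_right ε1 (ε u)]) (by linarith)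
    rw [e1] at e2
    have h3 : s1 * (-d) = s u * (-d) := by linarith [e2]
    have h4 : (-d) ≠ 0 := by linarith
    exact mul_right_cancel₀ h4 h3
  have hσ1 : s 1 = 1 := by
    refine (huniq 1 1 1 one_pos fun t ht1 ht2 => ?_).symm
    have : ((1 : G) : Equiv.Perm ℝ) t = t := rfl
    rw [this]; ring
  have hσm : ∀ u v : G, s (u * v) = s u * s v := by
    intro u v
    refine (huniq (u * v) (s u * s v) (min (ε v) (ε u / s v))
      (lt_min (hε v) (div_pos (hε u) (hs v))) fun t ht1 ht2 => ?_).symm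
    have hco : ((u * v : G) : Equiv.Perm ℝ) t = (u : Equiv.Perm ℝ) ((v : Equiv.Perm ℝ) t) := rfl
    have h2 : c - ε v ≤ t := le_trans (by linarith [min_le_left (ε v) (ε u / s v)]) ht1
    have hv := hrep v t h2 ht2
    rw [hco, hv]
    have h3 : s v * (t - c) ≤ 0 := mul_nonpos_of_nonneg_of_nonpos (hs v).le (by linarith)
    have h4 : - ε u ≤ s v * (t - c) := by
      have h5 : c - ε u / s v ≤ t := le_trans (by linarith [min_le_right (ε v) (ε u / s v)]) ht1
      have h6 : -(ε u / s v) ≤ t - c := by linarith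
      have h7 : s v * (-(ε u / s v)) ≤ s v * (t - c) := mul_le_mul_of_nonneg_left h6 (hs v).le
      have h8 : s v * (-(ε u / s v)) = - ε u := by
        rw [mul_neg, mul_comm, div_mul_cancel₀ (ε u) (ne_of_gt (hs v))]
      linarith
    rw [hrep u (c + s v * (t - c)) (by linarith) (by linarith)]
    ring
  refine ⟨s, hσ1, hσm, fun u => (hs u).ne', ?_⟩
  intro w hσw
  have hm0 : 0 < m := by
    have h1 := mono_of hG f (show c - δ < c by linarith)
    rw [fix_c hG f, hfrep (c - δ) le_rfl (by linarith)] at h1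
    nlinarith
  have hfk : ∀ (k : ℕ) (t : ℝ), c - δ ≤ t → t ≤ c →
      ((f ^ k : G) : Equiv.Perm ℝ) t = c + m ^ k * (t - c) := by
    intro k
    induction k with
    | zero =>
      intro t ht1 ht2
      have : ((f ^ 0 : G) : Equiv.Perm ℝ) t = t := by rw [pow_zero]; rfl
      rw [this]; ring
    | succ k ih =>
      intro t ht1 ht2
      have hco : ((f ^ (k+1) : G) : Equiv.Perm ℝ) t
          = (f : Equiv.Perm ℝ) (((f ^ k : G) : Equiv.Perm ℝ) t) := by
        rw [pow_succ']; rfl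
      rw [hco, ih t ht1 ht2]
      have hk1 : m ^ k ≤ 1 := pow_le_one₀ hm0.le hm1.le
      have h3 : m ^ k * (t - c) ≤ 0 := mul_nonpos_of_nonneg_of_nonpos (by positivity) (by linarith)
      have h4 : - δ ≤ m ^ k * (t - c) := by nlinarith
      rw [hfrep (c + m ^ k * (t - c)) (by linarith) (by linarith)]
      ring
  obtain ⟨k₀, hk₀⟩ : ∃ k₀ : ℕ, m ^ k₀ * δ < ε w := by
    obtain ⟨n, hn⟩ := exists_pow_lt_of_lt_one (div_pos (hε w) hδ) hm1
    refine ⟨n, ?_⟩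
    rw [lt_div_iff₀ hδ] at hn
    exact hn
  refine ⟨k₀, fun k hk => ?_⟩
  set μ : ℝ := m ^ k with hμdef
  have hμ0 : 0 < μ := by rw [hμdef]; exact pow_pos hm0 k
  have hμ1 : μ ≤ 1 := by rw [hμdef]; exact pow_le_one₀ hm0.le hm1.le
  have hμδ : μ * δ < ε w := by
    have h1 : m ^ k ≤ m ^ k₀ := pow_le_pow_of_le_one hm0.le hm1.le hk
    have h2 : m ^ k * δ ≤ m ^ k₀ * δ := by nlinarith
    rw [← hμdef] at h2
    linarith
  have hwfix : ∀ t : ℝ, c - μ * δ ≤ t → (w : Equiv.Perm ℝ) t = t := by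
    intro t ht
    rcases lt_or_ge c t with h' | h'
    · exact fix_gt hG w h'
    · have := hrep w t (by nlinarith) h'
      rw [this, hσw]; ring
  have hmapS : ∀ t : ℝ, c - δ ≤ t → t ≤ c →
      c - δ ≤ (h : Equiv.Perm ℝ) t ∧ (h : Equiv.Perm ℝ) t ≤ c := by
    intro t h1 h2
    by_contra hcon
    have h3 : (h : Equiv.Perm ℝ) t ∉ Icc (c - δ) c := by
      rw [mem_Icc]; exact hcon
    have h4 : (h : Equiv.Perm ℝ) t ∉ suppOf ⇑(h : Equiv.Perm ℝ) := fun hs => h3 (hsupp hs)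
    have h5 : (h : Equiv.Perm ℝ) ((h : Equiv.Perm ℝ) t) = (h : Equiv.Perm ℝ) t := by
      by_contra h6; exact h4 h6
    have h7 : (h : Equiv.Perm ℝ) t = t := (h : Equiv.Perm ℝ).injective h5
    rw [h7] at h3
    exact h3 (mem_Icc.mpr ⟨h1, h2⟩)
  have hinvJ : ∀ t : ℝ, c - μ * δ ≤ t → t ≤ c →
      ((f ^ k : G) : Equiv.Perm ℝ)⁻¹ t = c + (t - c) / μ := by
    intro t h1 h2
    have hx1 : c - δ ≤ c + (t - c) / μ := by
      have : - δ ≤ (t - c) / μ := by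
        rw [le_div_iff₀ hμ0]; nlinarith
      linarith
    have hx2 : c + (t - c) / μ ≤ c := by
      have : (t - c) / μ ≤ 0 := div_nonpos_of_nonpos_of_nonneg (by linarith) hμ0.le
      linarith
    have h3 : ((f ^ k : G) : Equiv.Perm ℝ) (c + (t - c) / μ) = t := by
      rw [hfk k _ hx1 hx2, ← hμdef]
      have h5 : c + (t - c) / μ - c = (t - c) / μ := by ring
      rw [h5, mul_comm, div_mul_cancel₀ (t - c) (ne_of_gt hμ0)]
      ring
    rw [Equiv.Perm.inv_def, Equiv.symm_apply_eq]
    exact h3.symm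
  have hθco : ∀ t : ℝ, ((f ^ k * h * (f ^ k)⁻¹ : G) : Equiv.Perm ℝ) t
      = ((f ^ k : G) : Equiv.Perm ℝ) ((h : Equiv.Perm ℝ) (((f ^ k : G) : Equiv.Perm ℝ)⁻¹ t)) :=
    fun t => rfl
  have hsupθ : ∀ t : ℝ, ¬ (c - μ * δ ≤ t ∧ t ≤ c) →
      ((f ^ k * h * (f ^ k)⁻¹ : G) : Equiv.Perm ℝ) t = t := by
    intro t ht
    set ξ : ℝ := ((f ^ k : G) : Equiv.Perm ℝ)⁻¹ t with hξdef
    have hξS : ¬ (c - δ ≤ ξ ∧ ξ ≤ c) := by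
      rintro ⟨h1, h2⟩
      apply ht
      have h3 : ((f ^ k : G) : Equiv.Perm ℝ) ξ = t := by
        rw [hξdef]; exact Equiv.apply_symm_apply _ _
      rw [hfk k ξ h1 h2, ← hμdef] at h3
      constructor <;> nlinarith
    have hξsupp : ξ ∉ suppOf ⇑(h : Equiv.Perm ℝ) := by
      intro hs
      have := hsupp hs
      rw [mem_Icc] at this
      exact hξS this
    have hhξ : (h : Equiv.Perm ℝ) ξ = ξ := by
      by_contra h6; exact hξsupp h6
    rw [hθco, ← hξdef, hhξ, hξdef, Equiv.Perm.coe_inv, Equiv.apply_symm_apply]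
  have hθJ : ∀ t : ℝ, c - μ * δ ≤ t → t ≤ c →
      c - μ * δ ≤ ((f ^ k * h * (f ^ k)⁻¹ : G) : Equiv.Perm ℝ) t ∧
      ((f ^ k * h * (f ^ k)⁻¹ : G) : Equiv.Perm ℝ) t ≤ c := by
    intro t h1 h2
    rw [hθco, hinvJ t h1 h2]
    have hx1 : c - δ ≤ c + (t - c) / μ := by
      have : - δ ≤ (t - c) / μ := by rw [le_div_iff₀ hμ0]; nlinarith
      linarith
    have hx2 : c + (t - c) / μ ≤ c := by
      have : (t - c) / μ ≤ 0 := div_nonpos_of_nonpos_of_nonneg (by linarith) hμ0.le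
      linarith
    obtain ⟨hh1, hh2⟩ := hmapS _ hx1 hx2
    rw [hfk k _ hh1 hh2, ← hμdef]
    constructor <;> nlinarith
  have hwJc : ∀ t : ℝ, ¬ (c - μ * δ ≤ t ∧ t ≤ c) →
      ¬ (c - μ * δ ≤ (w : Equiv.Perm ℝ) t ∧ (w : Equiv.Perm ℝ) t ≤ c) := by
    intro t ht
    rcases lt_or_ge c t with h' | h'
    · rw [fix_gt hG w h']
      exact ht
    · have h2 : t < c - μ * δ := by
        by_contra h3
        push_neg at h3
        exact ht ⟨h3, h'⟩
      have h4 : (w : Equiv.Perm ℝ) t < (w : Equiv.Perm ℝ) (c - μ * δ) := mono_of hG w h2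
      rw [hwfix (c - μ * δ) le_rfl] at h4
      rintro ⟨h5, _⟩
      linarith
  apply Subtype.ext
  apply Equiv.ext
  intro t
  have hco1 : ((w * (f ^ k * h * (f ^ k)⁻¹) : G) : Equiv.Perm ℝ) t
      = (w : Equiv.Perm ℝ) (((f ^ k * h * (f ^ k)⁻¹ : G) : Equiv.Perm ℝ) t) := rfl
  have hco2 : (((f ^ k * h * (f ^ k)⁻¹ : G) * w : G) : Equiv.Perm ℝ) t
      = ((f ^ k * h * (f ^ k)⁻¹ : G) : Equiv.Perm ℝ) ((w : Equiv.Perm ℝ) t) := rfl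
  show ((w * (f ^ k * h * (f ^ k)⁻¹) : G) : Equiv.Perm ℝ) t
      = (((f ^ k * h * (f ^ k)⁻¹ : G) * w : G) : Equiv.Perm ℝ) t
  rw [hco1, hco2]
  by_cases htJ : c - μ * δ ≤ t ∧ t ≤ c
  · obtain ⟨hθ1, hθ2⟩ := hθJ t htJ.1 htJ.2
    rw [hwfix _ hθ1, hwfix t htJ.1]
  · rw [hsupθ t htJ, hsupθ _ (hwJc t htJ)]

end germ
end S9


/-- **Lemma (Statement 9).** Let `G ≤ PL_o([a,c])` be finitely generated and `χ` a
non-zero character of `G`. If `G` contains `f`, `h` with positive `χ`-values such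
that, for some `δ > 0`, either `f` is linear on `[a,a+δ]` with slope `< 1` and
`supp h ⊆ [a,a+δ]`, or `f` is affine on `[c−δ,c]` with slope `< 1` and
`supp h ⊆ [c−δ,c]`, then `[χ] ∈ Σ¹(G)`. -/
theorem memSigma1_of_f_h
    (a c : ℝ) (hac : a < c)
    (G : Subgroup (Equiv.Perm ℝ)) (hG : (G : Set (Equiv.Perm ℝ)) ⊆ PLo (Icc a c))
    (hfg : G.FG)
    (χ : G → ℝ) (hχ : IsChar χ) (hne : χ ≠ 0)
    (f h : G) (hf : 0 < χ f) (hh : 0 < χ h)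
    (δ : ℝ) (hδ : 0 < δ)
    (hcond :
      ((∃ m : ℝ, m < 1 ∧ ∀ t : ℝ, a ≤ t → t ≤ a + δ →
          (f : Equiv.Perm ℝ) t = a + m * (t - a)) ∧
        suppOf (⇑(h : Equiv.Perm ℝ)) ⊆ Icc a (a + δ)) ∨
      ((∃ m b : ℝ, m < 1 ∧ ∀ t : ℝ, c - δ ≤ t → t ≤ c →
          (f : Equiv.Perm ℝ) t = m * t + b) ∧
        suppOf (⇑(h : Equiv.Perm ℝ)) ⊆ Icc (c - δ) c)) :
    MemSigma1 χ := by
  rcases hcond with ⟨⟨m, hm1, hfrep⟩, hsupp⟩ | ⟨⟨m, b, hm1, hfrep⟩, hsupp⟩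
  · obtain ⟨σ, hσ1, hσm, hσ0, Hc⟩ := S9.case_R hac hG f h δ hδ m hm1 hfrep hsupp
    exact S9.core χ hχ hne σ hσ1 hσm hσ0 f h hf hh Hc
  · obtain ⟨σ, hσ1, hσm, hσ0, Hc⟩ := S9.case_L hac hG f h δ hδ m b hm1 hfrep hsupp
    exact S9.core χ hχ hne σ hσ1 hσm hσ0 f h hf hh Hc
end

section
/- Let G be an irreducible subgroup of PL_o([a,c]), where a < c. If the quotient G/(ker σ_ℓ · ker σ_r) is a torsion group (for every g ∈ G there is n ≥ 1 with g^n ∈ (ker σ_ℓ)·(ker σ_r), kernels taken in G), then G is not abelian. -/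
open Set

lemma affine_congr {m b m' b' t ε : ℝ} (hε : 0 < ε)
    (h : ∀ u : ℝ, |u - t| < ε → m * u + b = m' * u + b') : m = m' ∧ b = b' := by
  have h1 := h t (by simp [hε])
  have h2 := h (t + ε / 2) (by rw [add_sub_cancel_left, abs_of_pos (by linarith)]; linarith)
  have e1 : m * (t + ε / 2) + b = m * t + b + m * (ε / 2) := by ring
  have e2 : m' * (t + ε / 2) + b' = m' * t + b' + m' * (ε / 2) := by ring
  have hm : m * (ε / 2) = m' * (ε / 2) := by linarith
  have hmm : m = m' := mul_right_cancel₀ (by linarith) hm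
  exact ⟨hmm, by rw [hmm] at h1; linarith⟩

lemma locally_affine_glue {f : ℝ → ℝ} {x y : ℝ} (hxy : x < y)
    (h : ∀ t ∈ Ioo x y, ∃ m b ε : ℝ, 0 < ε ∧ ∀ u : ℝ, |u - t| < ε → f u = m * u + b) :
    ∃ m b : ℝ, ∀ t ∈ Ioo x y, f t = m * t + b := by
  have hmid : (x + y) / 2 ∈ Ioo x y := ⟨by linarith, by linarith⟩
  obtain ⟨m0, b0, ε0, hε0, h0⟩ := h _ hmid
  refine ⟨m0, b0, ?_⟩
  set V : Set ℝ := {t | ∃ ε > (0:ℝ), ∀ u : ℝ, |u - t| < ε → f u = m0 * u + b0} with hV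
  set W : Set ℝ := {t | ∃ m b, ∃ ε > (0:ℝ),
      (∀ u : ℝ, |u - t| < ε → f u = m * u + b) ∧ ¬(m = m0 ∧ b = b0)} with hW
  have hVopen : IsOpen V := by
    rw [Metric.isOpen_iff]
    rintro t ⟨ε, hε, hf⟩
    refine ⟨ε, hε, fun t' ht' => ?_⟩
    rw [Metric.mem_ball, Real.dist_eq] at ht'
    refine ⟨ε - |t' - t|, by linarith, fun u hu => hf u ?_⟩
    calc |u - t| ≤ |u - t'| + |t' - t| := abs_sub_le _ _ _
      _ < ε := by linarith
  have hWopen : IsOpen W := by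
    rw [Metric.isOpen_iff]
    rintro t ⟨m, b, ε, hε, hf, hne⟩
    refine ⟨ε, hε, fun t' ht' => ?_⟩
    rw [Metric.mem_ball, Real.dist_eq] at ht'
    refine ⟨m, b, ε - |t' - t|, by linarith, fun u hu => hf u ?_, hne⟩
    calc |u - t| ≤ |u - t'| + |t' - t| := abs_sub_le _ _ _
      _ < ε := by linarith
  have hcover : Ioo x y ⊆ V ∪ W := by
    intro t ht
    obtain ⟨m, b, ε, hε, hf⟩ := h t ht
    by_cases hc : m = m0 ∧ b = b0
    · exact Or.inl ⟨ε, hε, by rw [← hc.1, ← hc.2]; exact hf⟩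
    · exact Or.inr ⟨m, b, ε, hε, hf, hc⟩
  have hdisj : ∀ t, t ∈ V → t ∈ W → False := by
    rintro t ⟨ε1, hε1, hf1⟩ ⟨m, b, ε2, hε2, hf2, hne⟩
    apply hne
    have := affine_congr (m := m) (b := b) (m' := m0) (b' := b0) (t := t)
      (ε := min ε1 ε2) (lt_min hε1 hε2) (fun u hu => by
        rw [← hf2 u (lt_of_lt_of_le hu (min_le_right _ _)),
          hf1 u (lt_of_lt_of_le hu (min_le_left _ _))])
    exact this
  have hVmid : (x + y) / 2 ∈ V := ⟨ε0, hε0, h0⟩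
  have hWempty : ∀ t ∈ Ioo x y, t ∉ W := by
    intro t ht htW
    have hpc := isPreconnected_Ioo (a := x) (b := y)
    obtain ⟨z, hz⟩ := hpc V W hVopen hWopen hcover ⟨_, hmid, hVmid⟩ ⟨t, ht, htW⟩
    exact hdisj z hz.2.1 hz.2.2
  intro t ht
  rcases hcover ht with hV' | hW'
  · obtain ⟨ε, hε, hf⟩ := hV'
    exact hf t (by simp [hε])
  · exact absurd hW' (hWempty t ht)

theorem Equiv.Perm.apply_inv_self (f : Equiv.Perm ℝ) (x : ℝ) : f (f⁻¹ x) = x :=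
  f.apply_symm_apply x

lemma exists_gap_right (B : Finset ℝ) {a c : ℝ} (hac : a < c) :
    ∃ δ : ℝ, 0 < δ ∧ a + δ ≤ c ∧ ∀ x ∈ B, x ∉ Ioo a (a + δ) := by
  classical
  set S : Finset ℝ := insert c (B.filter (a < ·)) with hS
  have hSne : S.Nonempty := ⟨c, Finset.mem_insert_self _ _⟩
  set μ := S.min' hSne with hμ
  have hμa : a < μ := by
    have hm := S.min'_mem hSne
    rcases Finset.mem_insert.mp hm with h | h
    · rw [hμ, h]; exact hac
    · rw [hμ]; exact (Finset.mem_filter.mp h).2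
  refine ⟨μ - a, by linarith, ?_, ?_⟩
  · have : μ ≤ c := S.min'_le c (Finset.mem_insert_self _ _)
    linarith
  · intro x hx hmem
    have h1 : a < x := hmem.1
    have h2 : x < a + (μ - a) := hmem.2
    have : μ ≤ x := S.min'_le x (Finset.mem_insert.mpr (Or.inr (Finset.mem_filter.mpr ⟨hx, h1⟩)))
    linarith

lemma exists_gap_left (B : Finset ℝ) {a c : ℝ} (hac : a < c) :
    ∃ δ : ℝ, 0 < δ ∧ a ≤ c - δ ∧ ∀ x ∈ B, x ∉ Ioo (c - δ) c := by
  classical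
  set S : Finset ℝ := insert a (B.filter (· < c)) with hS
  have hSne : S.Nonempty := ⟨a, Finset.mem_insert_self _ _⟩
  set μ := S.max' hSne with hμ
  have hμc : μ < c := by
    have hm := S.max'_mem hSne
    rcases Finset.mem_insert.mp hm with h | h
    · rw [hμ, h]; exact hac
    · rw [hμ]; exact (Finset.mem_filter.mp h).2
  refine ⟨c - μ, by linarith, ?_, ?_⟩
  · have : a ≤ μ := S.le_max' a (Finset.mem_insert_self _ _)
    linarith
  · intro x hx hmem
    have h1 : c - (c - μ) < x := hmem.1
    have h2 : x < c := hmem.2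
    have : x ≤ μ := S.le_max' x (Finset.mem_insert.mpr (Or.inr (Finset.mem_filter.mpr ⟨hx, h2⟩)))
    linarith

/-- **Lemma (Statement 10).** If `G ≤ PL_o([a,c])` is irreducible and
`G/(ker σ_ℓ · ker σ_r)` is a torsion group, then `G` is not abelian. -/
theorem not_abelian_of_torsion_quotient
    (a c : ℝ) (hac : a < c)
    (G : Subgroup (Equiv.Perm ℝ)) (hG : (G : Set (Equiv.Perm ℝ)) ⊆ PLo (Icc a c))
    (hirr : ∀ t : ℝ, a < t → t < c → ∃ g ∈ G, g t ≠ t)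
    (htor : ∀ g : G, ∃ n : ℕ, 1 ≤ n ∧ ∃ u v : G,
        rightSlope (⇑(u : Equiv.Perm ℝ)) a = 1 ∧
        leftSlope (⇑(v : Equiv.Perm ℝ)) c = 1 ∧ g ^ n = u * v) :
    ¬ (∀ g ∈ G, ∀ h ∈ G, g * h = h * g) := by
  intro habel
  have hSM : ∀ g ∈ G, StrictMono ⇑g := fun g hg => (hG hg).1
  have hPL : ∀ g ∈ G, IsFinitaryPL ⇑g := fun g hg => (hG hg).2.1
  have hcont : ∀ g ∈ G, Continuous ⇑g := by
    intro g hg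
    have := (StrictMono.orderIsoOfSurjective ⇑g (hSM g hg) g.surjective).continuous
    rwa [StrictMono.coe_orderIsoOfSurjective] at this
  have hsuppIoo : ∀ g ∈ G, suppOf ⇑g ⊆ Ioo a c := by
    intro g hg t ht
    have hIcc : suppOf ⇑g ⊆ Icc a c := (hG hg).2.2
    have hopen : IsOpen (suppOf ⇑g) := isOpen_ne_fun (hcont g hg) continuous_id
    obtain ⟨ε, hε, hball⟩ := Metric.isOpen_iff.mp hopen t ht
    have h1 := hIcc ht
    constructor
    · rcases eq_or_lt_of_le h1.1 with he | h
      · exfalso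
        have hmem : t - ε / 2 ∈ suppOf ⇑g := hball (by
          rw [Metric.mem_ball, Real.dist_eq]
          rw [abs_of_nonpos (by linarith)]
          linarith)
        have := (hIcc hmem).1
        linarith [he ▸ this]
      · exact h
    · rcases eq_or_lt_of_le h1.2 with he | h
      · exfalso
        have hmem : t + ε / 2 ∈ suppOf ⇑g := hball (by
          rw [Metric.mem_ball, Real.dist_eq, add_sub_cancel_left,
            abs_of_pos (by linarith)]
          linarith)
        have := (hIcc hmem).2
        linarith
      · exact h
  have hfix_out : ∀ g ∈ G, ∀ t : ℝ, t ∉ Ioo a c → g t = t := by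
    intro g hg t ht
    by_contra hne
    exact ht (hsuppIoo g hg hne)
  have hcommpt : ∀ g ∈ G, ∀ h ∈ G, ∀ t : ℝ, g (h t) = h (g t) := by
    intro g hg h hh t
    have h1 : (g * h) t = (h * g) t := by rw [habel g hg h hh]
    simpa [Equiv.Perm.mul_apply] using h1
  have hsupp_iff : ∀ g ∈ G, ∀ h ∈ G, ∀ t : ℝ, t ∈ suppOf ⇑g ↔ h t ∈ suppOf ⇑g := by
    intro g hg h hh t
    simp only [suppOf, mem_setOf_eq]
    rw [hcommpt g hg h hh t]
    exact (h.injective.ne_iff).symm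
  -- fixed points of the whole group: inf and sup of supports
  have hfixInf : ∀ u ∈ G, ∀ h ∈ G, (suppOf ⇑u).Nonempty → BddBelow (suppOf ⇑u) →
      h (sInf (suppOf ⇑u)) = sInf (suppOf ⇑u) := by
    intro u hu h hh hne hbdd
    have key : ∀ h' ∈ G, h' (sInf (suppOf ⇑u)) ≤ sInf (suppOf ⇑u) := by
      intro h' hh'
      apply le_csInf hne
      intro t ht
      have h1 : h'⁻¹ t ∈ suppOf ⇑u := by
        have := hsupp_iff u hu h' hh' (h'⁻¹ t)
        rw [Equiv.Perm.apply_inv_self] at this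
        exact this.mpr ht
      calc h' (sInf (suppOf ⇑u)) ≤ h' (h'⁻¹ t) := (hSM h' hh').monotone (csInf_le hbdd h1)
        _ = t := Equiv.Perm.apply_inv_self _ _
    have h1 := key h hh
    have h2 := key h⁻¹ (inv_mem hh)
    have h3 := (hSM h hh).monotone h2
    rw [Equiv.Perm.apply_inv_self] at h3
    exact le_antisymm h1 h3
  have hfixSup : ∀ u ∈ G, ∀ h ∈ G, (suppOf ⇑u).Nonempty → BddAbove (suppOf ⇑u) →
      h (sSup (suppOf ⇑u)) = sSup (suppOf ⇑u) := by
    intro u hu h hh hne hbdd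
    have key : ∀ h' ∈ G, sSup (suppOf ⇑u) ≤ h' (sSup (suppOf ⇑u)) := by
      intro h' hh'
      apply csSup_le hne
      intro t ht
      have h1 : h'⁻¹ t ∈ suppOf ⇑u := by
        have := hsupp_iff u hu h' hh' (h'⁻¹ t)
        rw [Equiv.Perm.apply_inv_self] at this
        exact this.mpr ht
      calc t = h' (h'⁻¹ t) := (Equiv.Perm.apply_inv_self _ _).symm
        _ ≤ h' (sSup (suppOf ⇑u)) := (hSM h' hh').monotone (le_csSup hbdd h1)
    have h1 := key h hh
    have h2 := key h⁻¹ (inv_mem hh)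
    have h3 := (hSM h hh).monotone h2
    rw [Equiv.Perm.apply_inv_self] at h3
    exact le_antisymm h3 h1
  -- supp nonempty leads to contradiction (given identity near a or near c)
  have hone_of_supp_empty : ∀ w : Equiv.Perm ℝ, suppOf ⇑w = ∅ → w = 1 := by
    intro w hw
    ext t
    by_contra hne
    exact absurd hw (Nonempty.ne_empty ⟨t, hne⟩)
  -- ker σ_ℓ trivial
  have hkerR : ∀ w : Equiv.Perm ℝ, w ∈ G → rightSlope ⇑w a = 1 → w = 1 := by
    intro w hw hw1
    obtain ⟨B, hB⟩ := hPL w hw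
    obtain ⟨δ, hδ0, hδc, hδB⟩ := exists_gap_right B hac
    have haδ : a < a + δ := by linarith
    obtain ⟨m, b, hmb⟩ := locally_affine_glue haδ (fun t ht => hB t (fun hmem => hδB t hmem ht))
    have hcw : Continuous ⇑w := hcont w hw
    have hEq : EqOn ⇑w (fun t => m * t + b) (Icc a (a + δ)) := by
      have h1 : EqOn ⇑w (fun t => m * t + b) (Ioo a (a + δ)) := fun t ht => hmb t ht
      have h2 := h1.closure hcw ((continuous_const.mul continuous_id).add continuous_const)
      rwa [closure_Ioo haδ.ne] at h2
    have hwa : w a = a := hfix_out w hw a (fun h => absurd h.1 (lt_irrefl a))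
    have hm : m = 1 := by
      have hev : ⇑w =ᶠ[nhdsWithin a (Ici a)] fun t => m * t + b := by
        have hmem : Iio (a + δ) ∩ Ici a ∈ nhdsWithin a (Ici a) :=
          Filter.inter_mem (mem_nhdsWithin_of_mem_nhds (Iio_mem_nhds haδ)) self_mem_nhdsWithin
        filter_upwards [hmem] with t ht
        exact hEq ⟨ht.2, le_of_lt ht.1⟩
      have hd : rightSlope ⇑w a = m := by
        unfold rightSlope
        rw [hev.derivWithin_eq (hEq ⟨le_refl a, le_of_lt haδ⟩)]
        have hda : HasDerivAt (fun t : ℝ => m * t + b) m a := by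
          simpa using ((hasDerivAt_id a).const_mul m).add_const b
        exact hda.hasDerivWithinAt.derivWithin (uniqueDiffOn_Ici a a self_mem_Ici)
      rw [hd] at hw1
      exact hw1
    have hb : b = 0 := by
      have h1 := hEq ⟨le_refl a, le_of_lt haδ⟩
      simp only [hwa, hm, one_mul] at h1
      linarith
    have hidnear : ∀ t ∈ Ioo a (a + δ), w t = t := by
      intro t ht
      rw [hmb t ht, hm, hb]; ring
    by_contra hne
    have hsne : (suppOf ⇑w).Nonempty := by
      rcases eq_empty_or_nonempty (suppOf ⇑w) with h | h
      · exact absurd (hone_of_supp_empty w h) hne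
      · exact h
    have hbdd : BddBelow (suppOf ⇑w) := ⟨a, fun t ht => le_of_lt (hsuppIoo w hw ht).1⟩
    have hslb : a + δ ≤ sInf (suppOf ⇑w) := by
      apply le_csInf hsne
      intro t ht
      by_contra hlt
      push_neg at hlt
      exact ht (hidnear t ⟨(hsuppIoo w hw ht).1, hlt⟩)
    obtain ⟨t0, ht0⟩ := hsne
    have hsc : sInf (suppOf ⇑w) < c := lt_of_le_of_lt (csInf_le hbdd ht0) (hsuppIoo w hw ht0).2
    have hsa : a < sInf (suppOf ⇑w) := lt_of_lt_of_le haδ hslb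
    obtain ⟨g0, hg0, hg0s⟩ := hirr _ hsa hsc
    exact hg0s (hfixInf w hw g0 hg0 ⟨t0, ht0⟩ hbdd)
  -- ker σ_r trivial
  have hkerL : ∀ w : Equiv.Perm ℝ, w ∈ G → leftSlope ⇑w c = 1 → w = 1 := by
    intro w hw hw1
    obtain ⟨B, hB⟩ := hPL w hw
    obtain ⟨δ, hδ0, hδa, hδB⟩ := exists_gap_left B hac
    have hcδ : c - δ < c := by linarith
    obtain ⟨m, b, hmb⟩ := locally_affine_glue hcδ (fun t ht => hB t (fun hmem => hδB t hmem ht))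
    have hcw : Continuous ⇑w := hcont w hw
    have hEq : EqOn ⇑w (fun t => m * t + b) (Icc (c - δ) c) := by
      have h1 : EqOn ⇑w (fun t => m * t + b) (Ioo (c - δ) c) := fun t ht => hmb t ht
      have h2 := h1.closure hcw ((continuous_const.mul continuous_id).add continuous_const)
      rwa [closure_Ioo hcδ.ne] at h2
    have hwc : w c = c := hfix_out w hw c (fun h => absurd h.2 (lt_irrefl c))
    have hm : m = 1 := by
      have hev : ⇑w =ᶠ[nhdsWithin c (Iic c)] fun t => m * t + b := by
        have hmem : Ioi (c - δ) ∩ Iic c ∈ nhdsWithin c (Iic c) :=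
          Filter.inter_mem (mem_nhdsWithin_of_mem_nhds (Ioi_mem_nhds hcδ)) self_mem_nhdsWithin
        filter_upwards [hmem] with t ht
        exact hEq ⟨le_of_lt ht.1, ht.2⟩
      have hd : leftSlope ⇑w c = m := by
        unfold leftSlope
        rw [hev.derivWithin_eq (hEq ⟨le_of_lt hcδ, le_refl c⟩)]
        have hda : HasDerivAt (fun t : ℝ => m * t + b) m c := by
          simpa using ((hasDerivAt_id c).const_mul m).add_const b
        exact hda.hasDerivWithinAt.derivWithin (uniqueDiffOn_Iic c c self_mem_Iic)
      rw [hd] at hw1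
      exact hw1
    have hb : b = 0 := by
      have h1 := hEq ⟨le_of_lt hcδ, le_refl c⟩
      simp only [hwc, hm, one_mul] at h1
      linarith
    have hidnear : ∀ t ∈ Ioo (c - δ) c, w t = t := by
      intro t ht
      rw [hmb t ht, hm, hb]; ring
    by_contra hne
    have hsne : (suppOf ⇑w).Nonempty := by
      rcases eq_empty_or_nonempty (suppOf ⇑w) with h | h
      · exact absurd (hone_of_supp_empty w h) hne
      · exact h
    have hbdd : BddAbove (suppOf ⇑w) := ⟨c, fun t ht => le_of_lt (hsuppIoo w hw ht).2⟩
    have hsub : sSup (suppOf ⇑w) ≤ c - δ := by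
      apply csSup_le hsne
      intro t ht
      by_contra hlt
      push_neg at hlt
      exact ht (hidnear t ⟨hlt, (hsuppIoo w hw ht).2⟩)
    obtain ⟨t0, ht0⟩ := hsne
    have hsa : a < sSup (suppOf ⇑w) := lt_of_lt_of_le (hsuppIoo w hw ht0).1 (le_csSup hbdd ht0)
    have hsc : sSup (suppOf ⇑w) < c := lt_of_le_of_lt hsub hcδ
    obtain ⟨g0, hg0, hg0s⟩ := hirr _ hsa hsc
    exact hg0s (hfixSup w hw g0 hg0 ⟨t0, ht0⟩ hbdd)
  -- every element of G is the identity
  have hall : ∀ g ∈ G, ∀ t : ℝ, g t = t := by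
    intro g hg t
    obtain ⟨n, hn1, u, v, hu, hv, hguv⟩ := htor ⟨g, hg⟩
    have hu1 : (u : Equiv.Perm ℝ) = 1 := hkerR _ u.2 hu
    have hv1 : (v : Equiv.Perm ℝ) = 1 := hkerL _ v.2 hv
    have huv : u * v = 1 := by
      have : ((u * v : G) : Equiv.Perm ℝ) = 1 := by
        push_cast [hu1, hv1]
        simp [hu1, hv1]
      exact (OneMemClass.coe_eq_one).mp this
    have hgn : (⟨g, hg⟩ : G) ^ n = 1 := by rw [hguv, huv]
    have hgnP : g ^ n = 1 := by
      have h2 := congrArg (fun x : G => (x : Equiv.Perm ℝ)) hgn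
      simpa using h2
    by_contra hne
    have hsm := hSM g hg
    obtain ⟨k, rfl⟩ : ∃ k, n = k + 1 := ⟨n - 1, (Nat.succ_pred_eq_of_pos hn1).symm⟩
    rcases lt_or_gt_of_ne hne with hlt | hgt
    · have key : ∀ j : ℕ, (⇑g)^[j] t ≤ t := by
        intro j
        induction j with
        | zero => exact le_refl t
        | succ j ih =>
          rw [Function.iterate_succ_apply']
          exact le_trans (hsm.monotone ih) (le_of_lt hlt)
      have hlt2 : (⇑g)^[k + 1] t < t := by
        rw [Function.iterate_succ_apply']
        exact lt_of_le_of_lt (hsm.monotone (key k)) hlt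
      rw [Equiv.Perm.iterate_eq_pow, hgnP] at hlt2
      simp at hlt2
    · have key : ∀ j : ℕ, t ≤ (⇑g)^[j] t := by
        intro j
        induction j with
        | zero => exact le_refl t
        | succ j ih =>
          rw [Function.iterate_succ_apply']
          exact le_trans (le_of_lt hgt) (hsm.monotone ih)
      have hlt2 : t < (⇑g)^[k + 1] t := by
        rw [Function.iterate_succ_apply']
        exact lt_of_lt_of_le hgt (hsm.monotone (key k))
      rw [Equiv.Perm.iterate_eq_pow, hgnP] at hlt2
      simp at hlt2
  obtain ⟨g0, hg0, hg0m⟩ := hirr ((a + c) / 2) (by linarith) (by linarith)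
  exact hg0m (hall g0 hg0 _)
end
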